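/- arXiv:2001.03047 — 3 statements merged into one kernel-verified Lean document; each statement's English description precedes it below -/
import Mathlib

section
/- Let m ∈ (−1,1) and μ := arctanh(−m). Let I be a finite nonempty index set and f : {−1,1}^{|I|} → ℝ. Then: (i) for every finite set Λ with N := |Λ| ≥ |I| such that m lies in the range of m_N and m ∉ {−1,1}, |∫ f∘P_I dμ_MC^{m;N} − ∫ f∘P_I dμ_C^{μ;N}| ≤ √(2|I|) · (max_{σ∈{−1,1}^{|I|}} |f(σ)|) · √(ln(N+1)/N); and (ii) there exists N(m) ∈ ℕ such that for all N ≥ N(m) with m in the range of m_N, H(μ_MC^{m;N} ‖ μ_C^{μ;N})/N ≥ ln(N+1)/(4N), so the logarithmic factor in (i) cannot be removed by this relative-entropy bound. -/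
/-- The inverse hyperbolic tangent, `arctanh x = (1/2) ln((1+x)/(1−x))`. -/
noncomputable def artanh (x : ℝ) : ℝ := Real.log ((1 + x) / (1 - x)) / 2

/-- The magnetization `M[φ] = ∑_x φ(x)` of a spin configuration `φ ∈ {−1,1}^N`,
encoded as `φ : Fin N → Bool` with `true ↦ 1`, `false ↦ −1`. -/
noncomputable def mag {N : ℕ} (φ : Fin N → Bool) : ℝ :=
  ∑ x, if φ x then (1 : ℝ) else -1

-- The set `S_m` of configurations with magnetization density `m`.
open Classical in
noncomputable def magSet (N : ℕ) (m : ℝ) : Finset (Fin N → Bool) :=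
  Finset.univ.filter fun φ => mag φ / N = m

/-- Expectation of `f` in the auxiliary microcanonical ensemble `μ_MC^{m;N}`. -/
noncomputable def mcExp (N : ℕ) (m : ℝ) (f : (Fin N → Bool) → ℝ) : ℝ :=
  (∑ φ ∈ magSet N m, f φ) / ((magSet N m).card : ℝ)

/-- The auxiliary canonical partition function `Z_C(μ;N) = ∑_φ e^{−μ M[φ]}`. -/
noncomputable def Zcan (N : ℕ) (μ : ℝ) : ℝ :=
  ∑ φ : Fin N → Bool, Real.exp (-μ * mag φ)

/-- Expectation of `f` in the auxiliary canonical ensemble `μ_C^{μ;N}`. -/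
noncomputable def canExp (N : ℕ) (μ : ℝ) (f : (Fin N → Bool) → ℝ) : ℝ :=
  (∑ φ : Fin N → Bool, Real.exp (-μ * mag φ) * f φ) / Zcan N μ

/-- The relative entropy `H(μ_MC^{m;N} ‖ μ_C^{μ;N})`. -/
noncomputable def relEnt (N : ℕ) (m μ : ℝ) : ℝ :=
  ∑ φ ∈ magSet N m, ((magSet N m).card : ℝ)⁻¹ *
    Real.log (((magSet N m).card : ℝ)⁻¹ / (Real.exp (-μ * mag φ) / Zcan N μ))

/-- The projection `P_I : {−1,1}^N → {−1,1}^n`. -/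
noncomputable def projB {N n : ℕ} (I : Finset (Fin N)) (h : I.card = n)
    (φ : Fin N → Bool) (j : Fin n) : Bool :=
  φ ↑(I.orderIsoOfFin h j)



open Finset
open Real hiding artanh

def bcount {α : Type*} [Fintype α] (u : α → Bool) : ℕ := ∑ x, (if u x then 1 else 0)

lemma bcount_le {α : Type*} [Fintype α] (u : α → Bool) : bcount u ≤ Fintype.card α := by
  classical
  calc bcount u ≤ ∑ _x : α, 1 := Finset.sum_le_sum (fun x _ => by split <;> simp)
  _ = Fintype.card α := by simp

lemma bcount_fin_le {i : ℕ} (σ : Fin i → Bool) : bcount σ ≤ i := by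
  simpa using bcount_le σ

lemma bcount_cons {i : ℕ} (b : Bool) (σ : Fin i → Bool) :
    bcount (Fin.cons b σ) = (if b then 1 else 0) + bcount σ := by
  rw [bcount, Fin.sum_univ_succ]
  simp [bcount]


lemma bcount_eq_card {α : Type*} [Fintype α] (u : α → Bool) :
    bcount u = (Finset.univ.filter fun x => u x = true).card := by
  classical
  rw [Finset.card_filter, bcount]

lemma card_bcount (α : Type*) [Fintype α] [DecidableEq α] (t : ℕ) :
    (Finset.univ.filter fun u : α → Bool => bcount u = t).card = (Fintype.card α).choose t := by
  classical
  rw [← Finset.card_univ, ← Finset.card_powersetCard t (Finset.univ : Finset α)]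
  apply Finset.card_bij (fun u _ => Finset.univ.filter fun x => u x = true)
  · intro u hu
    rw [Finset.mem_powersetCard]
    refine ⟨Finset.filter_subset _ _, ?_⟩
    rw [← bcount_eq_card]
    exact (Finset.mem_filter.mp hu).2
  · intro u hu v hv hfil
    funext x
    have := Finset.ext_iff.mp hfil x
    simp only [Finset.mem_filter, Finset.mem_univ, true_and] at this
    cases hux : u x <;> cases hvx : v x <;> simp [hux, hvx] at this ⊢
  · intro s hs
    rw [Finset.mem_powersetCard] at hs
    refine ⟨fun x => decide (x ∈ s), Finset.mem_filter.mpr ⟨Finset.mem_univ _, ?_⟩, ?_⟩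
    · rw [bcount_eq_card, ← hs.2]
      congr 1
      ext x
      simp
    · ext x
      simp

/-- microcanonical marginal weight -/
noncomputable def Aw (N k i : ℕ) (σ : Fin i → Bool) : ℝ :=
  if bcount σ ≤ k then ((N - i).choose (k - bcount σ) : ℝ) / (N.choose k : ℝ) else 0

/-- canonical (product) marginal weight -/
noncomputable def Bw (p : ℝ) {i : ℕ} (σ : Fin i → Bool) : ℝ :=
  p ^ (bcount σ) * (1 - p) ^ (i - bcount σ)

noncomputable def rr (N k i : ℕ) (σ : Fin i → Bool) : ℝ :=
  ((k : ℝ) - (bcount σ : ℝ)) / ((N : ℝ) - (i : ℝ))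

noncomputable def hh (x : ℝ) : ℝ := Real.negMulLog x + Real.negMulLog (1 - x)

noncomputable def Dk (N k i : ℕ) : ℝ :=
  ∑ σ : Fin i → Bool, Aw N k i σ * Real.log (Aw N k i σ / Bw ((k : ℝ)/(N : ℝ)) σ)

noncomputable def ee (N k i : ℕ) : ℝ := ∑ σ : Fin i → Bool, Aw N k i σ * hh (rr N k i σ)

lemma Aw_nonneg (N k i : ℕ) (σ : Fin i → Bool) : 0 ≤ Aw N k i σ := by
  unfold Aw; split <;> positivity

lemma Aw_pos_facts {N k i : ℕ} (hkN : k ≤ N) {σ : Fin i → Bool} (h : Aw N k i σ ≠ 0) :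
    bcount σ ≤ k ∧ k - bcount σ ≤ N - i := by
  unfold Aw at h
  by_cases hj : bcount σ ≤ k
  · refine ⟨hj, ?_⟩
    rw [if_pos hj] at h
    by_contra hlt
    push_neg at hlt
    rw [Nat.choose_eq_zero_of_lt hlt] at h
    simp at h
  · rw [if_neg hj] at h; simp at h

lemma sum_cons_split {M : Type*} [AddCommMonoid M] (i : ℕ) (G : (Fin (i+1) → Bool) → M) :
    ∑ σ : Fin (i+1) → Bool, G σ
      = ∑ σ : Fin i → Bool, (G (Fin.cons true σ) + G (Fin.cons false σ)) := by
  rw [← Equiv.sum_comp (Fin.consEquiv (fun _ : Fin (i+1) => Bool)) G]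
  rw [Fintype.sum_prod_type, Fintype.sum_bool]
  rw [← Finset.sum_add_distrib]
  rfl

lemma R1true {N k i : ℕ} (hkN : k ≤ N) (hiN : i < N) (σ : Fin i → Bool) :
    Aw N k (i+1) (Fin.cons true σ) = Aw N k i σ * rr N k i σ := by
  have hC : (0:ℝ) < (N.choose k : ℝ) := by
    exact_mod_cast Nat.cast_pos.mpr (Nat.choose_pos hkN)
  have hNi : (0:ℝ) < (N:ℝ) - (i:ℝ) := by
    have : (i:ℝ) < (N:ℝ) := by exact_mod_cast hiN
    linarith
  obtain ⟨j, hj⟩ : ∃ j, bcount σ = j := ⟨_, rfl⟩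
  have hbc : bcount (Fin.cons true σ) = 1 + j := by rw [bcount_cons, hj]; simp
  unfold Aw rr
  rw [hbc, hj]
  rcases lt_trichotomy j k with hjk | hjk | hjk
  · -- j < k
    rw [if_pos (by omega), if_pos (le_of_lt hjk)]
    have hid := Nat.add_one_mul_choose_eq (N - (i+1)) (k - (1+j))
    have e1 : N - (i+1) + 1 = N - i := by omega
    have e2 : k - (1+j) + 1 = k - j := by omega
    rw [e1, e2] at hid
    have hidR : ((N - i : ℕ) : ℝ) * ((N-(i+1)).choose (k-(1+j)) : ℝ)
        = ((N-i).choose (k-j) : ℝ) * ((k - j : ℕ) : ℝ) := by exact_mod_cast hid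
    have c1 : ((N - i : ℕ) : ℝ) = (N:ℝ) - i := by rw [Nat.cast_sub (le_of_lt hiN)]
    have c2 : ((k - j : ℕ) : ℝ) = (k:ℝ) - j := by rw [Nat.cast_sub (le_of_lt hjk)]
    rw [c1, c2] at hidR
    rw [div_mul_div_comm, div_eq_div_iff (by positivity) (by positivity)]
    linear_combination (N.choose k : ℝ) * hidR
  · -- j = k
    rw [if_neg (by omega), hjk]
    simp
  · -- j > k
    rw [if_neg (by omega), if_neg (by omega)]
    simp

lemma R1false {N k i : ℕ} (hkN : k ≤ N) (hiN : i < N) (σ : Fin i → Bool) :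
    Aw N k (i+1) (Fin.cons false σ) = Aw N k i σ * (1 - rr N k i σ) := by
  have hC : (0:ℝ) < (N.choose k : ℝ) := by
    exact_mod_cast Nat.cast_pos.mpr (Nat.choose_pos hkN)
  have hNi : (0:ℝ) < (N:ℝ) - (i:ℝ) := by
    have : (i:ℝ) < (N:ℝ) := by exact_mod_cast hiN
    linarith
  obtain ⟨j, hj⟩ : ∃ j, bcount σ = j := ⟨_, rfl⟩
  have hbc : bcount (Fin.cons false σ) = j := by rw [bcount_cons, hj]; simp
  unfold Aw rr
  rw [hbc, hj]
  by_cases hjk : j ≤ k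
  · by_cases hsm : k - j ≤ N - (i+1)
    · rw [if_pos hjk, if_pos hjk]
      have hid := Nat.choose_mul_succ_eq (N - (i+1)) (k - j)
      have e1 : N - (i+1) + 1 = N - i := by omega
      rw [e1] at hid
      have hidR : ((N-(i+1)).choose (k-j) : ℝ) * ((N - i:ℕ) : ℝ)
          = ((N-i).choose (k-j) : ℝ) * ((N - i - (k - j) : ℕ) : ℝ) := by exact_mod_cast hid
      have c1 : ((N - i : ℕ) : ℝ) = (N:ℝ) - i := by rw [Nat.cast_sub (le_of_lt hiN)]
      have c2 : ((k - j : ℕ) : ℝ) = (k:ℝ) - j := by rw [Nat.cast_sub hjk]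
      have c3 : ((N - i - (k - j) : ℕ) : ℝ) = ((N:ℝ) - i) - ((k:ℝ) - j) := by
        rw [Nat.cast_sub (by omega), c1, c2]
      rw [c1, c3] at hidR
      have hrw : 1 - ((k:ℝ) - j)/((N:ℝ) - i) = (((N:ℝ) - i) - ((k:ℝ) - j))/((N:ℝ) - i) := by
        field_simp
      rw [hrw, div_mul_div_comm, div_eq_div_iff (by positivity) (by positivity)]
      linear_combination (N.choose k : ℝ) * hidR
    · push_neg at hsm
      by_cases hfull : k - j ≤ N - i
      · -- k - j = N - i, so rr = 1
        rw [if_pos hjk, if_pos hjk]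
        rw [Nat.choose_eq_zero_of_lt hsm]
        have hr1 : ((k:ℝ) - j) = ((N:ℝ) - i) := by
          have c2 : ((k - j : ℕ) : ℝ) = (k:ℝ) - j := by rw [Nat.cast_sub hjk]
          have c1 : ((N - i : ℕ) : ℝ) = (N:ℝ) - i := by rw [Nat.cast_sub (le_of_lt hiN)]
          rw [← c2, ← c1]
          congr 1
          omega
        rw [hr1, div_self (ne_of_gt hNi)]
        simp
      · push_neg at hfull
        rw [if_pos hjk, if_pos hjk]
        rw [Nat.choose_eq_zero_of_lt (by omega), Nat.choose_eq_zero_of_lt hfull]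
        simp
  · rw [if_neg hjk, if_neg hjk]
    simp

lemma Aw_zero (N k : ℕ) (hkN : k ≤ N) (σ : Fin 0 → Bool) : Aw N k 0 σ = 1 := by
  have hb : bcount σ = 0 := by
    rw [bcount]
    simp
  unfold Aw
  rw [hb, if_pos (Nat.zero_le k)]
  simp only [Nat.sub_zero]
  rw [div_self]
  exact_mod_cast (Nat.choose_pos hkN).ne'

lemma sum_Aw (N k : ℕ) (hkN : k ≤ N) : ∀ i, i ≤ N → ∑ σ : Fin i → Bool, Aw N k i σ = 1 := by
  intro i
  induction i with
  | zero =>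
    intro _
    rw [Fintype.sum_unique]
    exact Aw_zero N k hkN _
  | succ i ih =>
    intro hiN
    have hiN' : i < N := by omega
    rw [sum_cons_split]
    have : ∀ σ : Fin i → Bool,
        Aw N k (i+1) (Fin.cons true σ) + Aw N k (i+1) (Fin.cons false σ) = Aw N k i σ := by
      intro σ
      rw [R1true hkN hiN' σ, R1false hkN hiN' σ]
      ring
    rw [Finset.sum_congr rfl (fun σ _ => this σ)]
    exact ih (le_of_lt hiN')

lemma mean_Aw (N k : ℕ) (hkN : k ≤ N) :
    ∀ i, i ≤ N → ∑ σ : Fin i → Bool, Aw N k i σ * (bcount σ : ℝ) = i * ((k:ℝ)/(N:ℝ)) := by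
  intro i
  induction i with
  | zero =>
    intro _
    rw [Fintype.sum_unique]
    norm_num [bcount]
  | succ i ih =>
    intro hiN
    have hiN' : i < N := by omega
    have hNne : (0:ℝ) < (N:ℝ) := by
      have : 0 < N := by omega
      exact_mod_cast this
    have hNi : (0:ℝ) < (N:ℝ) - (i:ℝ) := by
      have : (i:ℝ) < (N:ℝ) := by exact_mod_cast hiN'
      linarith
    have hsummean := ih (le_of_lt hiN')
    have hsum1 := sum_Aw N k hkN i (le_of_lt hiN')
    -- key : ∑ Aw * rr = k/N
    have hkey : ∑ σ : Fin i → Bool, Aw N k i σ * rr N k i σ = (k:ℝ)/(N:ℝ)  := by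
      have : ∀ σ : Fin i → Bool, Aw N k i σ * rr N k i σ
          = ((k:ℝ) * Aw N k i σ - Aw N k i σ * (bcount σ : ℝ)) / ((N:ℝ) - i) := by
        intro σ
        unfold rr
        field_simp
      rw [Finset.sum_congr rfl (fun σ _ => this σ), ← Finset.sum_div]
      rw [Finset.sum_sub_distrib, ← Finset.mul_sum, hsum1, hsummean]
      rw [div_eq_iff (ne_of_gt hNi)]
      field_simp
    rw [sum_cons_split]
    have hterm : ∀ σ : Fin i → Bool,
        Aw N k (i+1) (Fin.cons true σ) * (bcount (Fin.cons true σ) : ℝ)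
          + Aw N k (i+1) (Fin.cons false σ) * (bcount (Fin.cons false σ) : ℝ)
        = Aw N k i σ * (bcount σ : ℝ) + Aw N k i σ * rr N k i σ := by
      intro σ
      rw [R1true hkN hiN' σ, R1false hkN hiN' σ, bcount_cons, bcount_cons]
      simp only [if_true, if_false]
      push_cast
      ring
    rw [Finset.sum_congr rfl (fun σ _ => hterm σ), Finset.sum_add_distrib, hsummean, hkey]
    push_cast
    ring

lemma sum_Aw_rr (N k : ℕ) (hkN : k ≤ N) {i : ℕ} (hiN : i < N) :
    ∑ σ : Fin i → Bool, Aw N k i σ * rr N k i σ = (k:ℝ)/(N:ℝ) := by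
  have hNi : (0:ℝ) < (N:ℝ) - (i:ℝ) := by
    have : (i:ℝ) < (N:ℝ) := by exact_mod_cast hiN
    linarith
  have hNne : (0:ℝ) < (N:ℝ) := by
    have : 0 < N := lt_of_le_of_lt (Nat.zero_le i) hiN
    exact_mod_cast this
  have hsummean := mean_Aw N k hkN i (le_of_lt hiN)
  have hsum1 := sum_Aw N k hkN i (le_of_lt hiN)
  have : ∀ σ : Fin i → Bool, Aw N k i σ * rr N k i σ
      = ((k:ℝ) * Aw N k i σ - Aw N k i σ * (bcount σ : ℝ)) / ((N:ℝ) - i) := by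
    intro σ
    unfold rr
    field_simp
  rw [Finset.sum_congr rfl (fun σ _ => this σ), ← Finset.sum_div]
  rw [Finset.sum_sub_distrib, ← Finset.mul_sum, hsum1, hsummean]
  rw [div_eq_iff (ne_of_gt hNi)]
  field_simp

lemma hh_zero : hh 0 = 0 := by simp [hh, Real.negMulLog]

lemma hh_one : hh 1 = 0 := by simp [hh, Real.negMulLog]

lemma split_term_eq {A B p q r : ℝ} (hA : 0 ≤ A) (hB : 0 < B) (hp : 0 < p) (hq : 0 < q)
    (hr0 : 0 ≤ r) (hr1 : r ≤ 1) :
    (A*r) * Real.log ((A*r)/(B*p)) + (A*(1-r)) * Real.log ((A*(1-r))/(B*q))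
      = A * Real.log (A/B) - A * hh r - A * (r * Real.log p) - A * ((1-r) * Real.log q) := by
  rcases eq_or_lt_of_le hA with hA0 | hA0
  · rw [← hA0]
    simp
  have hBne := ne_of_gt hB
  have hAne := ne_of_gt hA0
  rcases eq_or_lt_of_le hr0 with h0 | h0
  · rw [← h0]
    simp only [mul_zero, zero_mul, sub_zero, mul_one, zero_add, hh_zero]
    rw [Real.log_div hAne (by positivity), Real.log_div hAne hBne,
      Real.log_mul hBne (ne_of_gt hq)]
    ring
  rcases eq_or_lt_of_le hr1 with h1 | h1
  · rw [h1]
    simp only [sub_self, mul_zero, zero_mul, mul_one, add_zero, hh_one]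
    rw [Real.log_div hAne (by positivity), Real.log_div hAne hBne,
      Real.log_mul hBne (ne_of_gt hp)]
    ring
  · have h1r : (0:ℝ) < 1 - r := by linarith
    rw [Real.log_div (by positivity) (by positivity),
        Real.log_div (by positivity) (by positivity),
        Real.log_mul hAne (ne_of_gt h0), Real.log_mul hAne (ne_of_gt h1r),
        Real.log_mul hBne (ne_of_gt hp), Real.log_mul hBne (ne_of_gt hq),
        Real.log_div hAne hBne]
    simp only [hh, Real.negMulLog]
    ring

lemma Bw_cons_true {i : ℕ} (p : ℝ) (σ : Fin i → Bool) :
    Bw p (Fin.cons true σ) = Bw p σ * p := by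
  unfold Bw
  rw [bcount_cons]
  norm_num
  have h1 : i + 1 - (1 + bcount σ) = i - bcount σ := by omega
  rw [h1, pow_add, pow_one]
  ring

lemma Bw_cons_false {i : ℕ} (p : ℝ) (σ : Fin i → Bool) :
    Bw p (Fin.cons false σ) = Bw p σ * (1-p) := by
  unfold Bw
  rw [bcount_cons]
  norm_num
  have h1 : i + 1 - bcount σ = (i - bcount σ) + 1 := by
    have := bcount_fin_le σ
    omega
  rw [h1, pow_succ]
  ring

lemma rr_mem01 {N k i : ℕ} (hkN : k ≤ N) (hiN : i < N) {σ : Fin i → Bool}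
    (h : Aw N k i σ ≠ 0) : 0 ≤ rr N k i σ ∧ rr N k i σ ≤ 1 := by
  obtain ⟨hjk, hkj⟩ := Aw_pos_facts hkN h
  unfold rr
  have hNi : (0:ℝ) < (N:ℝ) - (i:ℝ) := by
    have : (i:ℝ) < (N:ℝ) := by exact_mod_cast hiN
    linarith
  have hjR : ((bcount σ : ℝ)) ≤ (k:ℝ) := by exact_mod_cast hjk
  have hkjR : (k:ℝ) - (bcount σ : ℝ) ≤ (N:ℝ) - (i:ℝ) := by
    have h1 : ((k - bcount σ : ℕ) : ℝ) ≤ ((N - i : ℕ) : ℝ) := by exact_mod_cast hkj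
    rw [Nat.cast_sub hjk, Nat.cast_sub (le_of_lt hiN)] at h1
    exact h1
  constructor
  · exact div_nonneg (by linarith) (le_of_lt hNi)
  · rw [div_le_one hNi]
    exact hkjR

lemma DD (N k : ℕ) (hk0 : 0 < k) (hkN : k < N) {i : ℕ} (hiN : i < N) :
    Dk N k (i+1) = Dk N k i + hh ((k:ℝ)/(N:ℝ)) - ee N k i := by
  have hkN' : k ≤ N := le_of_lt hkN
  have hN0 : (0:ℝ) < (N:ℝ) := by
    have : 0 < N := by omega
    exact_mod_cast this
  have hp0 : 0 < (k:ℝ)/(N:ℝ) := by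
    have : (0:ℝ) < (k:ℝ) := by exact_mod_cast hk0
    positivity
  have hp1 : (k:ℝ)/(N:ℝ) < 1 := by
    rw [div_lt_one hN0]
    exact_mod_cast hkN
  have hq0 : (0:ℝ) < 1 - (k:ℝ)/(N:ℝ) := by linarith
  have key : ∀ σ : Fin i → Bool,
      Aw N k (i+1) (Fin.cons true σ) *
          Real.log (Aw N k (i+1) (Fin.cons true σ) / Bw ((k:ℝ)/(N:ℝ)) (Fin.cons true σ))
        + Aw N k (i+1) (Fin.cons false σ) *
          Real.log (Aw N k (i+1) (Fin.cons false σ) / Bw ((k:ℝ)/(N:ℝ)) (Fin.cons false σ))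
      = Aw N k i σ * Real.log (Aw N k i σ / Bw ((k:ℝ)/(N:ℝ)) σ)
        - Aw N k i σ * hh (rr N k i σ)
        - Aw N k i σ * (rr N k i σ * Real.log ((k:ℝ)/(N:ℝ)))
        - Aw N k i σ * ((1 - rr N k i σ) * Real.log (1 - (k:ℝ)/(N:ℝ))) := by
    intro σ
    rw [R1true hkN' hiN σ, R1false hkN' hiN σ, Bw_cons_true, Bw_cons_false]
    rcases eq_or_ne (Aw N k i σ) 0 with h0 | h0
    · rw [h0]
      simp
    · obtain ⟨hr0, hr1⟩ := rr_mem01 hkN' hiN h0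
      have hBpos : 0 < Bw ((k:ℝ)/(N:ℝ)) σ := by
        unfold Bw
        positivity
      exact split_term_eq (Aw_nonneg N k i σ) hBpos hp0 hq0 hr0 hr1
  unfold Dk
  rw [sum_cons_split, Finset.sum_congr rfl (fun σ _ => key σ)]
  rw [Finset.sum_sub_distrib, Finset.sum_sub_distrib, Finset.sum_sub_distrib]
  have e1 : ∑ σ : Fin i → Bool, Aw N k i σ * (rr N k i σ * Real.log ((k:ℝ)/(N:ℝ)))
      = ((k:ℝ)/(N:ℝ)) * Real.log ((k:ℝ)/(N:ℝ)) := by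
    have : ∀ σ : Fin i → Bool, Aw N k i σ * (rr N k i σ * Real.log ((k:ℝ)/(N:ℝ)))
        = (Aw N k i σ * rr N k i σ) * Real.log ((k:ℝ)/(N:ℝ)) := fun σ => by ring
    rw [Finset.sum_congr rfl (fun σ _ => this σ), ← Finset.sum_mul, sum_Aw_rr N k hkN' hiN]
  have e2 : ∑ σ : Fin i → Bool, Aw N k i σ * ((1 - rr N k i σ) * Real.log (1 - (k:ℝ)/(N:ℝ)))
      = (1 - (k:ℝ)/(N:ℝ)) * Real.log (1 - (k:ℝ)/(N:ℝ)) := by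
    have : ∀ σ : Fin i → Bool, Aw N k i σ * ((1 - rr N k i σ) * Real.log (1 - (k:ℝ)/(N:ℝ)))
        = (Aw N k i σ - Aw N k i σ * rr N k i σ) * Real.log (1 - (k:ℝ)/(N:ℝ)) := fun σ => by ring
    rw [Finset.sum_congr rfl (fun σ _ => this σ), ← Finset.sum_mul, Finset.sum_sub_distrib,
      sum_Aw N k hkN' i (le_of_lt hiN), sum_Aw_rr N k hkN' hiN]
  rw [e1, e2]
  have : ee N k i = ∑ σ : Fin i → Bool, Aw N k i σ * hh (rr N k i σ) := rfl
  rw [← this]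
  simp only [hh, Real.negMulLog]
  ring

lemma hh_concave2 {x y t : ℝ} (hx0 : 0 ≤ x) (hy0 : 0 ≤ y)
    (ht0 : 0 ≤ t) (ht1 : t ≤ 1) (hx1 : x ≤ 1) (hy1 : y ≤ 1) :
    t * hh x + (1-t) * hh y ≤ hh (t*x + (1-t)*y) := by
  have h1 := Real.concaveOn_negMulLog.2 (Set.mem_Ici.mpr hx0) (Set.mem_Ici.mpr hy0)
    ht0 (by linarith : (0:ℝ) ≤ 1 - t) (by ring)
  have h2 := Real.concaveOn_negMulLog.2
    (Set.mem_Ici.mpr (by linarith : (0:ℝ) ≤ 1 - x))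
    (Set.mem_Ici.mpr (by linarith : (0:ℝ) ≤ 1 - y))
    ht0 (by linarith : (0:ℝ) ≤ 1 - t) (by ring)
  simp only [smul_eq_mul] at h1 h2
  have e : t*(1-x) + (1-t)*(1-y) = 1 - (t*x + (1-t)*y) := by ring
  rw [e] at h2
  unfold hh
  linarith

lemma ee_mono (N k : ℕ) (hkN : k ≤ N) {i : ℕ} (hiN : i + 1 < N) :
    ee N k (i+1) ≤ ee N k i := by
  have hiN' : i < N := by omega
  have hNi : (0:ℝ) < (N:ℝ) - (i:ℝ) := by
    have : (i:ℝ) < (N:ℝ) := by exact_mod_cast hiN'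
    linarith
  have hNi1 : (0:ℝ) < (N:ℝ) - (i:ℝ) - 1 := by
    have : ((i:ℝ) + 1) < (N:ℝ) := by exact_mod_cast hiN
    linarith
  unfold ee
  rw [sum_cons_split]
  apply Finset.sum_le_sum
  intro σ _
  rw [R1true hkN hiN' σ, R1false hkN hiN' σ]
  rcases eq_or_ne (Aw N k i σ) 0 with h0 | h0
  · rw [h0]
    simp
  have hApos : 0 < Aw N k i σ := lt_of_le_of_ne (Aw_nonneg N k i σ) (Ne.symm h0)
  obtain ⟨hjk, hkj⟩ := Aw_pos_facts hkN h0
  obtain ⟨hr0, hr1⟩ := rr_mem01 hkN hiN' h0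
  have hjR : ((bcount σ : ℝ)) ≤ (k:ℝ) := by exact_mod_cast hjk
  have hkjR : (k:ℝ) - (bcount σ : ℝ) ≤ (N:ℝ) - (i:ℝ) := by
    have h1 : ((k - bcount σ : ℕ) : ℝ) ≤ ((N - i : ℕ) : ℝ) := by exact_mod_cast hkj
    rw [Nat.cast_sub hjk, Nat.cast_sub (le_of_lt hiN')] at h1
    exact h1
  have hrt : rr N k (i+1) (Fin.cons true σ) = ((k:ℝ) - (bcount σ : ℝ) - 1)/((N:ℝ) - i - 1) := by
    unfold rr
    rw [bcount_cons]
    norm_num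
    congr 1
    · push_cast
      ring
    · push_cast
      ring
  have hrf : rr N k (i+1) (Fin.cons false σ) = ((k:ℝ) - (bcount σ : ℝ))/((N:ℝ) - i - 1) := by
    unfold rr
    rw [bcount_cons]
    norm_num
    congr 1
    push_cast
    ring
  rw [hrt, hrf]
  rcases eq_or_lt_of_le hjR with hjeq | hjlt
  · -- bcount σ = k : rr = 0, second ratio = 0
    have hre : rr N k i σ = 0 := by
      unfold rr
      rw [← hjeq]
      simp
    have hx2 : ((k:ℝ) - (bcount σ : ℝ))/((N:ℝ) - i - 1) = 0 := by
      rw [← hjeq]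
      simp
    rw [hre, hx2]
    simp
  -- now bcount σ < k (as reals), i.e. rr > 0
  rcases eq_or_lt_of_le hkjR with hkeq | hklt
  · -- k - j = N - i : rr = 1, first ratio = 1
    have hre : rr N k i σ = 1 := by
      unfold rr
      rw [hkeq, div_self (ne_of_gt hNi)]
    have hx1 : ((k:ℝ) - (bcount σ : ℝ) - 1)/((N:ℝ) - i - 1) = 1 := by
      rw [show (k:ℝ) - (bcount σ : ℝ) - 1 = ((N:ℝ) - i) - 1 by rw [hkeq]]
      rw [div_self (ne_of_gt hNi1)]
    rw [hre, hx1]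
    simp
  · -- interior case : concavity
    set x1 := ((k:ℝ) - (bcount σ : ℝ) - 1)/((N:ℝ) - i - 1) with hx1
    set x2 := ((k:ℝ) - (bcount σ : ℝ))/((N:ℝ) - i - 1) with hx2
    set t := rr N k i σ with ht
    have hx10 : 0 ≤ x1 := by
      apply div_nonneg _ (le_of_lt hNi1)
      have : (bcount σ : ℝ) + 1 ≤ (k:ℝ) := by
        have : bcount σ < k := by exact_mod_cast hjlt
        exact_mod_cast this
      linarith
    have hx20 : 0 ≤ x2 := div_nonneg (by linarith) (le_of_lt hNi1)
    have hnat : k - bcount σ < N - i := by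
      have h1 : ((k - bcount σ : ℕ) : ℝ) < ((N - i : ℕ) : ℝ) := by
        rw [Nat.cast_sub hjk, Nat.cast_sub (le_of_lt hiN')]
        exact hklt
      exact_mod_cast h1
    have hx2bound : (k:ℝ) - (bcount σ : ℝ) ≤ (N:ℝ) - i - 1 := by
      have h2 : k - bcount σ ≤ N - i - 1 := by omega
      have h3 : ((k - bcount σ : ℕ) : ℝ) ≤ ((N - i - 1 : ℕ) : ℝ) := by exact_mod_cast h2
      rw [Nat.cast_sub hjk] at h3
      rw [Nat.cast_sub (by omega : 1 ≤ N - i), Nat.cast_sub (le_of_lt hiN')] at h3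
      simpa using h3
    have hx21 : x2 ≤ 1 := by
      rw [hx2, div_le_one hNi1]
      linarith
    have hx11 : x1 ≤ 1 := by
      rw [hx1, div_le_one hNi1]
      linarith
    have hcomb : t * x1 + (1-t) * x2 = t := by
      rw [ht, hx1, hx2]
      unfold rr
      field_simp
      ring
    have := hh_concave2 hx10 hx20 hr0 hr1 hx11 hx21
    rw [hcomb] at this
    calc Aw N k i σ * t * hh x1 + Aw N k i σ * (1 - t) * hh x2
        = Aw N k i σ * (t * hh x1 + (1-t) * hh x2) := by ring
    _ ≤ Aw N k i σ * hh t := by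
        apply mul_le_mul_of_nonneg_left this (le_of_lt hApos)

lemma Dk_zero (N k : ℕ) (hkN : k ≤ N) : Dk N k 0 = 0 := by
  unfold Dk
  rw [Fintype.sum_unique]
  norm_num [Aw_zero N k hkN, Bw, bcount]

lemma Dk_tele (N k : ℕ) (hk0 : 0 < k) (hkN : k < N) :
    ∀ i, i ≤ N → Dk N k i = ∑ j ∈ Finset.range i, (hh ((k:ℝ)/(N:ℝ)) - ee N k j) := by
  intro i
  induction i with
  | zero => intro _; simp [Dk_zero N k (le_of_lt hkN)]
  | succ i ih =>
    intro hiN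
    rw [Finset.sum_range_succ, ← ih (by omega), DD N k hk0 hkN (by omega)]
    ring

lemma ee_anti (N k : ℕ) (hkN : k ≤ N) :
    ∀ i j, i ≤ j → j < N → ee N k j ≤ ee N k i := by
  intro i j hij hjN
  induction j with
  | zero =>
    have : i = 0 := Nat.le_zero.mp hij
    rw [this]
  | succ j ih =>
    rcases Nat.lt_or_ge i (j+1) with h | h
    · have h1 : ee N k (j+1) ≤ ee N k j := ee_mono N k hkN hjN
      have h2 : ee N k j ≤ ee N k i := ih (by omega) (by omega)
      linarith
    · have : i = j + 1 := by omega
      rw [this]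

lemma avg_mono {δ : ℕ → ℝ} {n N : ℕ} (hn : n ≤ N)
    (hmono : ∀ i j, i ≤ j → j < N → δ i ≤ δ j) :
    (N:ℝ) * ∑ i ∈ Finset.range n, δ i ≤ (n:ℝ) * ∑ i ∈ Finset.range N, δ i := by
  rcases eq_or_lt_of_le hn with hEq | hlt
  · rw [hEq, mul_comm]
  have h1 : ∑ i ∈ Finset.range n, δ i ≤ (n:ℝ) * δ n := by
    have hle : ∑ i ∈ Finset.range n, δ i ≤ ∑ _i ∈ Finset.range n, δ n :=
      Finset.sum_le_sum (fun i hi => hmono i n (le_of_lt (Finset.mem_range.mp hi)) hlt)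
    rw [Finset.sum_const, Finset.card_range, nsmul_eq_mul] at hle
    exact hle
  have h2 : ((N:ℝ) - n) * δ n ≤ ∑ i ∈ Finset.Ico n N, δ i := by
    have hle : ∑ _i ∈ Finset.Ico n N, δ n ≤ ∑ i ∈ Finset.Ico n N, δ i := by
      apply Finset.sum_le_sum
      intro i hi
      obtain ⟨h3, h4⟩ := Finset.mem_Ico.mp hi
      exact hmono n i h3 h4
    rw [Finset.sum_const, Nat.card_Ico, nsmul_eq_mul, Nat.cast_sub hn] at hle
    exact hle
  have hsplit : ∑ i ∈ Finset.range N, δ i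
      = ∑ i ∈ Finset.range n, δ i + ∑ i ∈ Finset.Ico n N, δ i := by
    rw [Finset.sum_range_add_sum_Ico _ hn]
  have hNn : (0:ℝ) ≤ (N:ℝ) - n := by
    have : (n:ℝ) ≤ (N:ℝ) := by exact_mod_cast hn
    linarith
  have hn0 : (0:ℝ) ≤ (n:ℝ) := Nat.cast_nonneg n
  rw [hsplit]
  nlinarith [mul_le_mul_of_nonneg_left h1 hNn, mul_le_mul_of_nonneg_left h2 hn0]

lemma Dk_convex_ratio (N k : ℕ) (hk0 : 0 < k) (hkN : k < N) {n : ℕ} (hn : n ≤ N) :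
    (N:ℝ) * Dk N k n ≤ (n:ℝ) * Dk N k N := by
  rw [Dk_tele N k hk0 hkN n hn, Dk_tele N k hk0 hkN N (le_refl N)]
  apply avg_mono hn
  intro i j hij hjN
  have := ee_anti N k (le_of_lt hkN) i j hij hjN
  linarith

lemma Aw_N {N k : ℕ} (hkN : k ≤ N) (σ : Fin N → Bool) :
    Aw N k N σ = if bcount σ = k then 1/(N.choose k : ℝ) else 0 := by
  unfold Aw
  rcases lt_trichotomy (bcount σ) k with h | h | h
  · rw [if_pos (le_of_lt h), if_neg (ne_of_lt h)]
    rw [Nat.sub_self, Nat.choose_eq_zero_of_lt (by omega)]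
    simp
  · rw [if_pos (le_of_eq h), if_pos h, h, Nat.sub_self, Nat.sub_self]
    simp
  · rw [if_neg (by omega), if_neg (by omega)]

lemma Dk_N_eq (N k : ℕ) (hk0 : 0 < k) (hkN : k < N) :
    Dk N k N = - Real.log ((N.choose k : ℝ) * ((k:ℝ)/(N:ℝ))^k * (1 - (k:ℝ)/(N:ℝ))^(N-k)) := by
  have hkN' : k ≤ N := le_of_lt hkN
  have hC : (0:ℝ) < (N.choose k : ℝ) := by exact_mod_cast Nat.choose_pos hkN'
  have hN0 : (0:ℝ) < (N:ℝ) := by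
    have : 0 < N := by omega
    exact_mod_cast this
  have hp0 : 0 < (k:ℝ)/(N:ℝ) := by
    have : (0:ℝ) < (k:ℝ) := by exact_mod_cast hk0
    positivity
  have hq0 : (0:ℝ) < 1 - (k:ℝ)/(N:ℝ) := by
    have : (k:ℝ)/(N:ℝ) < 1 := by
      rw [div_lt_one hN0]
      exact_mod_cast hkN
    linarith
  have hptw : ∀ σ : Fin N → Bool,
      Aw N k N σ * Real.log (Aw N k N σ / Bw ((k:ℝ)/(N:ℝ)) σ)
      = if bcount σ = k then
          (1/(N.choose k : ℝ)) * Real.log ((1/(N.choose k : ℝ)) /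
            (((k:ℝ)/(N:ℝ))^k * (1 - (k:ℝ)/(N:ℝ))^(N-k))) else 0 := by
    intro σ
    rw [Aw_N hkN' σ]
    by_cases h : bcount σ = k
    · rw [if_pos h, if_pos h]
      unfold Bw
      rw [h]
    · rw [if_neg h, if_neg h]
      simp
  unfold Dk
  rw [Finset.sum_congr rfl (fun σ _ => hptw σ), Finset.sum_ite, Finset.sum_const_zero,
    Finset.sum_const, add_zero]
  have hcard : (Finset.univ.filter fun σ : Fin N → Bool => bcount σ = k).card = N.choose k := by
    rw [card_bcount, Fintype.card_fin]
  rw [hcard, nsmul_eq_mul]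
  rw [← Real.log_inv]
  have hXpos : (0:ℝ) < ((k:ℝ)/(N:ℝ))^k * (1 - (k:ℝ)/(N:ℝ))^(N-k) := by positivity
  have e : (1/(N.choose k : ℝ)) / (((k:ℝ)/(N:ℝ))^k * (1 - (k:ℝ)/(N:ℝ))^(N-k))
      = ((N.choose k : ℝ) * ((k:ℝ)/(N:ℝ))^k * (1 - (k:ℝ)/(N:ℝ))^(N-k))⁻¹ := by
    field_simp
  rw [e]
  field_simp

def Tm (N k j : ℕ) : ℕ := N.choose j * k^j * (N-k)^(N-j)

lemma Tm_up {N k j : ℕ} (hkj : k ≤ j) : Tm N k (j+1) ≤ Tm N k j := by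
  rcases Nat.lt_or_ge j N with hjN | hjN
  · apply Nat.le_of_mul_le_mul_right _ (Nat.succ_pos j)
    have key : (N-j)*k ≤ (N-k)*(j+1) :=
      Nat.mul_le_mul (Nat.sub_le_sub_left hkj N) (by omega)
    calc Tm N k (j+1) * (j+1)
        = N.choose (j+1)*(j+1) * (k^j * k) * (N-k)^(N-(j+1)) := by
          unfold Tm
          rw [pow_succ]
          ring
      _ = N.choose j * (N-j) * (k^j * k) * (N-k)^(N-(j+1)) := by
          rw [Nat.choose_succ_right_eq]
      _ = (N.choose j * k^j * (N-k)^(N-(j+1))) * ((N-j)*k) := by ring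
      _ ≤ (N.choose j * k^j * (N-k)^(N-(j+1))) * ((N-k)*(j+1)) :=
          Nat.mul_le_mul_left _ key
      _ = Tm N k j * (j+1) := by
          unfold Tm
          rw [show (N-k)^(N-j) = (N-k)^(N-(j+1))*(N-k) by
            rw [← pow_succ]
            congr 1
            omega]
          ring
  · unfold Tm
    rw [Nat.choose_eq_zero_of_lt (by omega)]
    simp

lemma Tm_down {N k j : ℕ} (hjk : j < k) (hkN : k ≤ N) : Tm N k j ≤ Tm N k (j+1) := by
  apply Nat.le_of_mul_le_mul_right _ (Nat.succ_pos j)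
  have key : (N-k)*(j+1) ≤ (N-j)*k :=
    Nat.mul_le_mul (Nat.sub_le_sub_left (le_of_lt hjk) N) hjk
  calc Tm N k j * (j+1)
      = (N.choose j * k^j * (N-k)^(N-(j+1))) * ((N-k)*(j+1)) := by
        unfold Tm
        rw [show (N-k)^(N-j) = (N-k)^(N-(j+1))*(N-k) by
          rw [← pow_succ]
          congr 1
          omega]
        ring
    _ ≤ (N.choose j * k^j * (N-k)^(N-(j+1))) * ((N-j)*k) := Nat.mul_le_mul_left _ key
    _ = N.choose j * (N-j) * (k^j * k) * (N-k)^(N-(j+1)) := by ring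
    _ = N.choose (j+1)*(j+1) * (k^j * k) * (N-k)^(N-(j+1)) := by
        rw [Nat.choose_succ_right_eq]
    _ = Tm N k (j+1) * (j+1) := by
        unfold Tm
        rw [pow_succ]
        ring

lemma Tm_max {N k : ℕ} (hkN : k ≤ N) : ∀ j, Tm N k j ≤ Tm N k k := by
  have haux : ∀ d, Tm N k (k+d) ≤ Tm N k k := by
    intro d
    induction d with
    | zero => rfl
    | succ d ih =>
      have := Tm_up (N := N) (k := k) (j := k + d) (by omega)
      calc Tm N k (k+(d+1)) = Tm N k ((k+d)+1) := by rw [Nat.add_succ]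
      _ ≤ Tm N k (k+d) := this
      _ ≤ Tm N k k := ih
  have haux2 : ∀ d, Tm N k (k-d) ≤ Tm N k k := by
    intro d
    induction d with
    | zero => rfl
    | succ d ih =>
      rcases Nat.lt_or_ge d k with hdk | hdk
      · have hstep : Tm N k (k-(d+1)) ≤ Tm N k ((k-(d+1))+1) :=
          Tm_down (by omega) hkN
        have : (k-(d+1))+1 = k-d := by omega
        rw [this] at hstep
        exact le_trans hstep ih
      · have : k - (d+1) = k - d := by omega
        rw [this]
        exact ih
  intro j
  rcases Nat.lt_or_ge j k with h | h
  · have : j = k - (k - j) := by omega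
    rw [this]
    exact haux2 (k-j)
  · have : j = k + (j - k) := by omega
    rw [this]
    exact haux (j-k)

lemma sum_Tm {N k : ℕ} (hkN : k ≤ N) : ∑ j ∈ Finset.range (N+1), Tm N k j = N^N := by
  have := add_pow k (N-k) N
  rw [show k + (N-k) = N by omega] at this
  rw [this]
  apply Finset.sum_congr rfl
  intro j _
  unfold Tm
  push_cast
  ring

lemma mode_ge {N k : ℕ} (hk0 : 0 < k) (hkN : k < N) :
    1/((N:ℝ)+1) ≤ (N.choose k : ℝ) * ((k:ℝ)/(N:ℝ))^k * (1 - (k:ℝ)/(N:ℝ))^(N-k) := by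
  have hkN' : k ≤ N := le_of_lt hkN
  have hN0 : (0:ℝ) < (N:ℝ) := by
    have : 0 < N := by omega
    exact_mod_cast this
  have hq : 1 - (k:ℝ)/(N:ℝ) = ((N-k : ℕ) : ℝ)/(N:ℝ) := by
    rw [Nat.cast_sub hkN']
    field_simp
  have hNN : (N:ℕ)^N ≤ (N+1) * Tm N k k := by
    calc N^N = ∑ j ∈ Finset.range (N+1), Tm N k j := (sum_Tm hkN').symm
    _ ≤ ∑ _j ∈ Finset.range (N+1), Tm N k k :=
        Finset.sum_le_sum (fun j _ => Tm_max hkN' j)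
    _ = (N+1) * Tm N k k := by
        rw [Finset.sum_const, Finset.card_range, smul_eq_mul]
  have hNNR : ((N:ℝ))^N ≤ ((N:ℝ)+1) * ((N.choose k : ℝ) * (k:ℝ)^k * ((N-k:ℕ):ℝ)^(N-k)) := by
    have := hNN
    exact_mod_cast this
  rw [hq, div_pow, div_pow]
  rw [div_le_iff₀ (by positivity)]
  have e : (N.choose k : ℝ) * ((k:ℝ)^k / (N:ℝ)^k) * (((N-k:ℕ):ℝ)^(N-k) / (N:ℝ)^(N-k)) * ((N:ℝ)+1)
      = ((N:ℝ)+1) * ((N.choose k : ℝ) * (k:ℝ)^k * ((N-k:ℕ):ℝ)^(N-k)) / ((N:ℝ)^k * (N:ℝ)^(N-k)) := by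
    field_simp
  rw [e, le_div_iff₀ (by positivity), one_mul]
  calc (N:ℝ)^k * (N:ℝ)^(N-k) = (N:ℝ)^N := by
        rw [← pow_add]
        congr 1
        omega
  _ ≤ ((N:ℝ)+1) * ((N.choose k : ℝ) * (k:ℝ)^k * ((N-k:ℕ):ℝ)^(N-k)) := hNNR

lemma Dk_N_le (N k : ℕ) (hk0 : 0 < k) (hkN : k < N) :
    Dk N k N ≤ Real.log ((N:ℝ)+1) := by
  rw [Dk_N_eq N k hk0 hkN]
  have h1 := mode_ge hk0 hkN
  have hpos : (0:ℝ) < 1/((N:ℝ)+1) := by positivity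
  have h2 := Real.log_le_log hpos h1
  rw [Real.log_div one_ne_zero (by positivity), Real.log_one] at h2
  linarith


-- auxiliary: log t + 1/t - 1 ≥ 0 for t > 0
lemma log_add_inv_sub_one_nonneg {t : ℝ} (ht : 0 < t) : 0 ≤ Real.log t + 1/t - 1 := by
  have h := Real.log_le_sub_one_of_pos (show (0:ℝ) < 1/t by positivity)
  rw [Real.log_div one_ne_zero (ne_of_gt ht), Real.log_one] at h
  linarith

noncomputable def vfun (t : ℝ) : ℝ := (t+1) * Real.log t - 2*(t-1)

lemma vfun_hasDeriv {t : ℝ} (ht : 0 < t) :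
    HasDerivAt vfun (Real.log t + 1/t - 1) t := by
  have h1 : HasDerivAt (fun t : ℝ => (t+1) * Real.log t) (1 * Real.log t + (t+1) * t⁻¹) t := by
    exact ((hasDerivAt_id t).add_const 1).mul (Real.hasDerivAt_log (ne_of_gt ht))
  have h2 : HasDerivAt (fun t : ℝ => 2*(t-1)) 2 t := by
    simpa using ((hasDerivAt_id t).sub_const 1).const_mul 2
  have := h1.sub h2
  refine this.congr_deriv ?_
  field_simp
  ring

lemma vfun_mono : MonotoneOn vfun (Set.Ioi (0:ℝ)) := by
  apply monotoneOn_of_deriv_nonneg (convex_Ioi 0)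
  · intro t ht
    exact (vfun_hasDeriv ht).continuousAt.continuousWithinAt
  · intro t ht
    rw [interior_Ioi] at ht
    exact (vfun_hasDeriv ht).differentiableAt.differentiableWithinAt
  · intro t ht
    rw [interior_Ioi] at ht
    rw [(vfun_hasDeriv ht).deriv]
    exact log_add_inv_sub_one_nonneg ht

lemma vfun_one : vfun 1 = 0 := by simp [vfun]

lemma vfun_nonneg {t : ℝ} (ht : 1 ≤ t) : 0 ≤ vfun t := by
  rw [← vfun_one]
  exact vfun_mono (by norm_num) (by exact lt_of_lt_of_le one_pos ht) ht

lemma vfun_nonpos {t : ℝ} (ht0 : 0 < t) (ht : t ≤ 1) : vfun t ≤ 0 := by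
  rw [← vfun_one]
  exact vfun_mono ht0 (by norm_num) ht

noncomputable def ufun (t : ℝ) : ℝ := (2*t+4) * (t * Real.log t - t + 1) - 3*(t-1)^2

lemma ufun_hasDeriv {t : ℝ} (ht : 0 < t) : HasDerivAt ufun (4 * vfun t) t := by
  have hl : HasDerivAt (fun t : ℝ => t * Real.log t) (Real.log t + 1) t := by
    have := (hasDerivAt_id t).mul (Real.hasDerivAt_log (ne_of_gt ht))
    refine this.congr_deriv ?_
    rw [id, mul_inv_cancel₀ (ne_of_gt ht)]; ring
  have h1 : HasDerivAt (fun t : ℝ => t * Real.log t - t + 1)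
      (Real.log t + 1 - 1) t := ((hl.sub (hasDerivAt_id t)).add_const 1)
  have h2 : HasDerivAt (fun t : ℝ => 2*t+4) 2 t := by
    simpa using ((hasDerivAt_id t).const_mul 2).add_const 4
  have h3 := h2.mul h1
  have h4 : HasDerivAt (fun t : ℝ => 3*(t-1)^2) (3*(2*(t-1))) t := by
    have := (((hasDerivAt_id t).sub_const 1).pow 2).const_mul 3
    simpa using this
  have := h3.sub h4
  refine this.congr_deriv ?_
  simp only [vfun]
  ring

lemma ufun_one : ufun 1 = 0 := by simp [ufun]

lemma ufun_nonneg {t : ℝ} (ht : 0 < t) : 0 ≤ ufun t := by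
  rcases le_total 1 t with h | h
  · have mono : MonotoneOn ufun (Set.Ici (1:ℝ)) := by
      apply monotoneOn_of_deriv_nonneg (convex_Ici 1)
      · intro s hs
        have hs0 : (0:ℝ) < s := lt_of_lt_of_le one_pos hs
        exact (ufun_hasDeriv hs0).continuousAt.continuousWithinAt
      · intro s hs
        rw [interior_Ici] at hs
        have hs0 : (0:ℝ) < s := lt_trans one_pos hs
        exact (ufun_hasDeriv hs0).differentiableAt.differentiableWithinAt
      · intro s hs
        rw [interior_Ici] at hs
        have hs0 : (0:ℝ) < s := lt_trans one_pos hs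
        rw [(ufun_hasDeriv hs0).deriv]
        have := vfun_nonneg (le_of_lt hs)
        linarith
    rw [← ufun_one]
    exact mono (by norm_num) h h
  · have anti : AntitoneOn ufun (Set.Ioc (0:ℝ) 1) := by
      apply antitoneOn_of_deriv_nonpos (convex_Ioc 0 1)
      · intro s hs
        exact (ufun_hasDeriv hs.1).continuousAt.continuousWithinAt
      · intro s hs
        rw [interior_Ioc] at hs
        exact (ufun_hasDeriv hs.1).differentiableAt.differentiableWithinAt
      · intro s hs
        rw [interior_Ioc] at hs
        rw [(ufun_hasDeriv hs.1).deriv]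
        have := vfun_nonpos hs.1 (le_of_lt hs.2)
        linarith
    rw [← ufun_one]
    exact anti (Set.mem_Ioc.mpr ⟨ht, h⟩) (by norm_num) h

lemma key_ineq {t : ℝ} (ht : 0 < t) :
    3 * (t - 1)^2 ≤ (2*t + 4) * (t * Real.log t - t + 1) := by
  have := ufun_nonneg ht
  simp only [ufun] at this
  linarith

lemma pointwise_pinsker {a b : ℝ} (ha : 0 ≤ a) (hb : 0 < b) :
    3*(a-b)^2 ≤ (2*a+4*b) * (a * Real.log (a/b) - a + b) := by
  rcases eq_or_lt_of_le ha with h | h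
  · rw [← h]
    simp only [zero_div, Real.log_zero]
    nlinarith
  · set L := Real.log (a/b) with hL
    have ht : 0 < a/b := div_pos h hb
    have hk := key_ineq ht
    rw [← hL] at hk
    have h2 := mul_le_mul_of_nonneg_left hk (sq_nonneg b)
    have hbne : b ≠ 0 := ne_of_gt hb
    have e1 : b^2 * (3 * (a/b - 1)^2) = 3*(a-b)^2 := by
      field_simp
      try ring
    have e2 : b^2 * ((2*(a/b) + 4) * ((a/b) * L - a/b + 1)) = (2*a+4*b) * (a * L - a + b) := by
      field_simp
    rw [e1, e2] at h2
    exact h2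

lemma pinsker {X : Type*} [Fintype X] (a b : X → ℝ) (ha : ∀ x, 0 ≤ a x) (hb : ∀ x, 0 < b x)
    (hsa : ∑ x, a x = 1) (hsb : ∑ x, b x = 1) :
    (∑ x, |a x - b x|)^2 ≤ 2 * ∑ x, a x * Real.log (a x / b x) := by
  classical
  set w : X → ℝ := fun x => 2 * a x + 4 * b x with hw
  have hwpos : ∀ x, 0 < w x := fun x => by
    have := ha x; have := hb x; simp only [hw]; linarith
  have hCS := Finset.sum_mul_sq_le_sq_mul_sq Finset.univ
      (fun x => |a x - b x| / Real.sqrt (w x)) (fun x => Real.sqrt (w x))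
  have hfg : ∀ x : X, |a x - b x| / Real.sqrt (w x) * Real.sqrt (w x) = |a x - b x| := by
    intro x
    rw [div_mul_cancel₀]
    exact ne_of_gt (Real.sqrt_pos.mpr (hwpos x))
  have hsq : ∀ x : X, (Real.sqrt (w x))^2 = w x := fun x => Real.sq_sqrt (le_of_lt (hwpos x))
  simp only [hfg] at hCS
  have hsumw : ∑ x, (Real.sqrt (w x))^2 = 6 := by
    rw [Finset.sum_congr rfl (fun x _ => hsq x)]; simp only [hw]
    rw [Finset.sum_add_distrib, ← Finset.mul_sum, ← Finset.mul_sum, hsa, hsb]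
    norm_num
  rw [hsumw] at hCS
  have hterm : ∀ x : X, (|a x - b x| / Real.sqrt (w x))^2
      ≤ (a x * Real.log (a x / b x) - a x + b x) / 3 := by
    intro x
    rw [div_pow, hsq, sq_abs, div_le_div_iff₀ (hwpos x) (by norm_num)]
    have := pointwise_pinsker (ha x) (hb x)
    simp only [hw]
    nlinarith [this]
  have hsum2 : ∑ x, (|a x - b x| / Real.sqrt (w x))^2
      ≤ ∑ x, (a x * Real.log (a x / b x) - a x + b x) / 3 :=
    Finset.sum_le_sum (fun x _ => hterm x)
  have heq : ∑ x, (a x * Real.log (a x / b x) - a x + b x) / 3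
      = (∑ x, a x * Real.log (a x / b x)) / 3 := by
    rw [← Finset.sum_div]
    congr 1
    rw [Finset.sum_add_distrib, Finset.sum_sub_distrib, hsa, hsb]
    ring
  rw [heq] at hsum2
  calc (∑ x, |a x - b x|)^2 ≤ ((∑ x, a x * Real.log (a x / b x)) / 3) * 6 :=
        le_trans hCS (by apply mul_le_mul_of_nonneg_right hsum2; norm_num)
  _ = 2 * ∑ x, a x * Real.log (a x / b x) := by ring




section Counting

variable {N n : ℕ} (I : Finset (Fin N))

lemma bcount_split (φ : Fin N → Bool) :
    bcount φ = bcount (fun x : {x // x ∈ I} => φ x.val)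
      + bcount (fun x : {x // x ∉ I} => φ x.val) := by
  classical
  unfold bcount
  rw [← Finset.sum_filter_add_sum_filter_not Finset.univ (fun x => x ∈ I)
      (fun x => if φ x then 1 else 0)]
  congr 1
  · rw [Finset.sum_subtype (Finset.univ.filter (· ∈ I))
      (by simp : ∀ x, x ∈ Finset.univ.filter (· ∈ I) ↔ x ∈ I) (fun x => if φ x then 1 else 0)]
  · rw [Finset.sum_subtype (Finset.univ.filter (· ∉ I))
      (by simp : ∀ x, x ∈ Finset.univ.filter (· ∉ I) ↔ x ∉ I) (fun x => if φ x then 1 else 0)]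

lemma proj_eq_iff (h : I.card = n) (φ : Fin N → Bool) (σ : Fin n → Bool) :
    projB I h φ = σ ↔ ∀ x : {x // x ∈ I}, φ x.val = σ ((I.orderIsoOfFin h).symm x) := by
  constructor
  · intro hproj x
    have := congrFun hproj ((I.orderIsoOfFin h).symm x)
    rw [← this]
    unfold projB
    congr 1
    exact (congrArg Subtype.val (OrderIso.apply_symm_apply (I.orderIsoOfFin h) x)).symm
  · intro hx
    funext j
    unfold projB
    rw [hx ((I.orderIsoOfFin h) j)]
    congr 1
    exact OrderIso.symm_apply_apply (I.orderIsoOfFin h) j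

lemma bcount_proj (h : I.card = n) (σ : Fin n → Bool) :
    bcount (fun x : {x // x ∈ I} => σ ((I.orderIsoOfFin h).symm x)) = bcount σ := by
  unfold bcount
  exact Fintype.sum_equiv (I.orderIsoOfFin h).toEquiv.symm _ _ (fun x => rfl)

lemma card_compl_subtype : Fintype.card {x // x ∉ I} = N - n → True := fun _ => trivial

lemma count_fiber (h : I.card = n) (t : ℕ) (σ : Fin n → Bool) :
    ((Finset.univ.filter fun φ : Fin N → Bool => bcount φ = t ∧ projB I h φ = σ)).card
      = if bcount σ ≤ t then (N-n).choose (t - bcount σ) else 0 := by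
  classical
  have hcardI : Fintype.card {x // x ∈ I} = n := by rw [Fintype.card_coe, h]
  have hcardC : Fintype.card {x // x ∉ I} = N - n := by
    have := Fintype.card_subtype_compl (fun x : Fin N => x ∈ I)
    rw [this, Fintype.card_fin, hcardI]
  by_cases hts : bcount σ ≤ t
  · rw [if_pos hts]
    rw [← hcardC, ← card_bcount {x : Fin N // x ∉ I} (t - bcount σ)]
    apply Finset.card_bij (fun φ _ => fun x : {x // x ∉ I} => φ x.val)
    · -- maps into
      intro φ hφ
      obtain ⟨hbc, hproj⟩ := (Finset.mem_filter.mp hφ).2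
      rw [proj_eq_iff] at hproj
      have hIpart : (fun x : {x // x ∈ I} => φ x.val)
          = (fun x : {x // x ∈ I} => σ ((I.orderIsoOfFin h).symm x)) := funext hproj
      have hsplit := bcount_split I φ
      rw [hIpart, bcount_proj I h σ] at hsplit
      refine Finset.mem_filter.mpr ⟨Finset.mem_univ _, ?_⟩
      omega
    · -- injective
      intro φ hφ ψ hψ heq
      obtain ⟨-, hprojφ⟩ := (Finset.mem_filter.mp hφ).2
      obtain ⟨-, hprojψ⟩ := (Finset.mem_filter.mp hψ).2
      rw [proj_eq_iff] at hprojφ hprojψ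
      funext x
      by_cases hx : x ∈ I
      · rw [hprojφ ⟨x, hx⟩, hprojψ ⟨x, hx⟩]
      · exact congrFun heq ⟨x, hx⟩
    · -- surjective
      intro v hv
      have hvbc : bcount v = t - bcount σ := (Finset.mem_filter.mp hv).2
      refine ⟨fun x : Fin N => if hx : x ∈ I then σ ((I.orderIsoOfFin h).symm ⟨x, hx⟩)
        else v ⟨x, hx⟩, ?_, ?_⟩
      · refine Finset.mem_filter.mpr ⟨Finset.mem_univ _, ?_, ?_⟩
        · rw [bcount_split I]
          have h1 : (fun x : {x // x ∈ I} =>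
              (if hx : x.val ∈ I then σ ((I.orderIsoOfFin h).symm ⟨x.val, hx⟩) else v ⟨x.val, hx⟩))
              = fun x : {x // x ∈ I} => σ ((I.orderIsoOfFin h).symm x) := by
            funext x
            rw [dif_pos x.2]
          have h2 : (fun x : {x // x ∉ I} =>
              (if hx : x.val ∈ I then σ ((I.orderIsoOfFin h).symm ⟨x.val, hx⟩) else v ⟨x.val, hx⟩))
              = v := by
            funext x
            rw [dif_neg x.2]
          rw [h1, h2, bcount_proj I h σ, hvbc]
          omega
        · rw [proj_eq_iff]
          intro x
          rw [dif_pos x.2]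
      · funext x
        show (if hx : (x:Fin N) ∈ I then σ ((I.orderIsoOfFin h).symm ⟨(x:Fin N), hx⟩)
          else v ⟨(x:Fin N), hx⟩) = v x
        rw [dif_neg x.2]
  · rw [if_neg hts]
    rw [Finset.card_eq_zero, Finset.eq_empty_iff_forall_notMem]
    intro φ hφ
    obtain ⟨hbc, hproj⟩ := (Finset.mem_filter.mp hφ).2
    rw [proj_eq_iff] at hproj
    have hIpart : (fun x : {x // x ∈ I} => φ x.val)
        = (fun x : {x // x ∈ I} => σ ((I.orderIsoOfFin h).symm x)) := funext hproj
    have hsplit := bcount_split I φ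
    rw [hIpart, bcount_proj I h σ] at hsplit
    omega

end Counting

lemma mag_eq_bcount {N : ℕ} (φ : Fin N → Bool) : mag φ = 2 * (bcount φ : ℝ) - N := by
  unfold mag
  have hptw : ∀ x : Fin N, (if φ x then (1:ℝ) else -1) = 2 * (if φ x then (1:ℝ) else 0) - 1 := by
    intro x
    split <;> norm_num
  rw [Finset.sum_congr rfl (fun x _ => hptw x), Finset.sum_sub_distrib, ← Finset.mul_sum]
  have hb : ((bcount φ : ℕ) : ℝ) = ∑ x, (if φ x then (1:ℝ) else 0) := by
    unfold bcount
    push_cast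
    apply Finset.sum_congr rfl
    intro x _
    split <;> norm_num
  rw [← hb]
  simp

lemma magSet_eq {N : ℕ} (hN : 0 < N) {m : ℝ} {φ₀ : Fin N → Bool} (h0 : mag φ₀ / N = m) :
    magSet N m = Finset.univ.filter (fun φ => bcount φ = bcount φ₀) := by
  classical
  have hNne : (N:ℝ) ≠ 0 := by
    have : (0:ℝ) < N := by exact_mod_cast hN
    linarith
  ext φ
  simp only [magSet, Finset.mem_filter, Finset.mem_univ, true_and]
  constructor
  · intro hφ
    have e1 : 2 * (bcount φ : ℝ) - N = m * N := by
      rw [← mag_eq_bcount]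
      exact (div_eq_iff hNne).mp hφ
    have e2 : 2 * (bcount φ₀ : ℝ) - N = m * N := by
      rw [← mag_eq_bcount]
      exact (div_eq_iff hNne).mp h0
    have : (bcount φ : ℝ) = (bcount φ₀ : ℝ) := by linarith
    exact_mod_cast this
  · intro hb
    rw [← h0]
    rw [mag_eq_bcount φ, mag_eq_bcount φ₀, hb]

lemma k_bounds {N : ℕ} {m : ℝ} (hm : m ∈ Set.Ioo (-1:ℝ) 1) {φ₀ : Fin N → Bool}
    (hN : 0 < N) (h0 : mag φ₀ / N = m) : 0 < bcount φ₀ ∧ bcount φ₀ < N := by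
  have hNR : (0:ℝ) < N := by exact_mod_cast hN
  have e2 : 2 * (bcount φ₀ : ℝ) - N = m * N := by
    rw [← mag_eq_bcount]
    exact (div_eq_iff (ne_of_gt hNR)).mp h0
  obtain ⟨hm1, hm2⟩ := hm
  constructor
  · have : (0:ℝ) < (bcount φ₀ : ℝ) := by nlinarith
    exact_mod_cast this
  · have : (bcount φ₀ : ℝ) < (N:ℝ) := by nlinarith
    exact_mod_cast this

lemma p_ident {N : ℕ} {m : ℝ} {φ₀ : Fin N → Bool} (hN : 0 < N) (h0 : mag φ₀ / N = m) :
    ((bcount φ₀ : ℝ)) / N = (1+m)/2 := by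
  have hNR : (0:ℝ) < N := by exact_mod_cast hN
  have e2 : 2 * (bcount φ₀ : ℝ) - N = m * N := by
    rw [← mag_eq_bcount]
    exact (div_eq_iff (ne_of_gt hNR)).mp h0
  field_simp
  linarith

lemma mc_sum {N n : ℕ} (I : Finset (Fin N)) (h : I.card = n) (f : (Fin n → Bool) → ℝ)
    {m : ℝ} {k : ℕ} (hkN : k ≤ N)
    (hmag : magSet N m = Finset.univ.filter (fun φ => bcount φ = k)) :
    mcExp N m (fun φ => f (projB I h φ)) = ∑ σ : Fin n → Bool, f σ * Aw N k n σ := by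
  classical
  have hcard : ((magSet N m).card : ℝ) = (N.choose k : ℝ) := by
    rw [hmag, card_bcount, Fintype.card_fin]
  unfold mcExp
  rw [hcard]
  have hnum : ∑ φ ∈ magSet N m, f (projB I h φ)
      = ∑ σ : Fin n → Bool, (if bcount σ ≤ k then ((N-n).choose (k - bcount σ) : ℝ) else 0) * f σ := by
    rw [← Finset.sum_fiberwise_of_maps_to (g := projB I h) (fun φ _ => Finset.mem_univ _)
      (fun φ => f (projB I h φ))]
    apply Finset.sum_congr rfl
    intro σ _
    have hinner : ∀ φ ∈ (magSet N m).filter (fun φ => projB I h φ = σ),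
        f (projB I h φ) = f σ := by
      intro φ hφ
      rw [(Finset.mem_filter.mp hφ).2]
    rw [Finset.sum_congr rfl hinner, Finset.sum_const, nsmul_eq_mul]
    congr 1
    rw [hmag, Finset.filter_filter]
    rw [count_fiber I h k σ]
    split <;> simp
  rw [hnum, Finset.sum_div]
  apply Finset.sum_congr rfl
  intro σ _
  unfold Aw
  split
  · ring
  · simp

lemma wexp {N : ℕ} (μ : ℝ) (φ : Fin N → Bool) :
    Real.exp (-μ * mag φ)
      = (Real.exp (-μ))^(bcount φ) * (Real.exp μ)^(N - bcount φ) := by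
  have hbN : bcount φ ≤ N := by simpa using bcount_le φ
  have e : -μ * mag φ = (bcount φ : ℕ) * (-μ) + ((N - bcount φ : ℕ) : ℝ) * μ := by
    rw [mag_eq_bcount, Nat.cast_sub hbN]
    ring
  rw [e, Real.exp_add, Real.exp_nat_mul, Real.exp_nat_mul]

lemma sum_bcount_group {N : ℕ} (F : ℕ → ℝ) :
    ∑ φ : Fin N → Bool, F (bcount φ)
      = ∑ t ∈ Finset.range (N+1), (N.choose t : ℝ) * F t := by
  classical
  rw [← Finset.sum_fiberwise_of_maps_to (g := bcount)
    (fun φ _ => Finset.mem_range.mpr (Nat.lt_succ_of_le (bcount_fin_le φ)))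
    (fun φ => F (bcount φ))]
  apply Finset.sum_congr rfl
  intro t _
  have hinner : ∀ φ ∈ Finset.univ.filter (fun φ : Fin N → Bool => bcount φ = t),
      F (bcount φ) = F t := by
    intro φ hφ
    rw [(Finset.mem_filter.mp hφ).2]
  rw [Finset.sum_congr rfl hinner, Finset.sum_const, nsmul_eq_mul]
  congr 1
  rw [card_bcount, Fintype.card_fin]

lemma Zcan_eq (N : ℕ) (μ : ℝ) : Zcan N μ = (Real.exp (-μ) + Real.exp μ)^N := by
  unfold Zcan
  rw [Finset.sum_congr rfl (fun φ _ => wexp μ φ)]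
  rw [sum_bcount_group (fun t => (Real.exp (-μ))^t * (Real.exp μ)^(N - t)), add_pow]
  apply Finset.sum_congr rfl
  intro t _
  push_cast
  ring

lemma gsum {wt wf : ℝ} {N n j : ℕ} (hj : j ≤ n) (hn : n ≤ N) :
    ∑ t ∈ Finset.range (N+1),
        ((if j ≤ t then ((N-n).choose (t-j) : ℝ) else 0) * ((wt:ℝ)^t * wf^(N-t)))
      = wt^j * wf^(n-j) * (wt+wf)^(N-n) := by
  classical
  have hsub : (Finset.range (N-n+1)).image (fun s => j + s) ⊆ Finset.range (N+1) := by
    intro t ht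
    obtain ⟨s, hs, rfl⟩ := Finset.mem_image.mp ht
    rw [Finset.mem_range] at hs ⊢
    omega
  rw [← Finset.sum_subset hsub]
  · rw [Finset.sum_image (by intro a _ b _ hab; simp only at hab; omega)]
    have hterm : ∀ s ∈ Finset.range (N-n+1),
        ((if j ≤ j + s then ((N-n).choose (j+s-j) : ℝ) else 0) * (wt^(j+s) * wf^(N-(j+s))))
        = (wt^j * wf^(n-j)) * (((N-n).choose s : ℝ) * (wt^s * wf^((N-n)-s))) := by
      intro s hs
      rw [Finset.mem_range] at hs
      rw [if_pos (by omega), show j + s - j = s by omega]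
      rw [show N - (j+s) = (n-j) + ((N-n)-s) by omega, pow_add, pow_add]
      ring
    rw [Finset.sum_congr rfl hterm, ← Finset.mul_sum]
    rw [add_pow]
    congr 1
    apply Finset.sum_congr rfl
    intro s _
    push_cast
    ring
  · intro t htr htim
    rw [Finset.mem_range] at htr
    by_cases hjt : j ≤ t
    · rw [if_pos hjt]
      have : N - n < t - j := by
        by_contra hc
        push_neg at hc
        exact htim (Finset.mem_image.mpr ⟨t - j, Finset.mem_range.mpr (by omega), by omega⟩)
      rw [Nat.choose_eq_zero_of_lt this]
      simp
    · rw [if_neg hjt]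
      simp

lemma pow_ratio {wt wf S : ℝ} (hS : S ≠ 0) {N n j : ℕ} (hj : j ≤ n) (hn : n ≤ N) :
    wt^j * wf^(n-j) * S^(N-n) / S^N = (wt/S)^j * (wf/S)^(n-j) := by
  rw [div_pow, div_pow, div_mul_div_comm]
  rw [show S^N = (S^j * S^(n-j)) * S^(N-n) by rw [← pow_add, ← pow_add]; congr 1; omega]
  rw [mul_div_mul_right _ _ (pow_ne_zero _ hS)]

lemma can_sum {N n : ℕ} (I : Finset (Fin N)) (h : I.card = n) (f : (Fin n → Bool) → ℝ)
    (μ : ℝ) (hn : n ≤ N) :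
    canExp N μ (fun φ => f (projB I h φ))
      = ∑ σ : Fin n → Bool, f σ *
          Bw (Real.exp (-μ) / (Real.exp (-μ) + Real.exp μ)) σ := by
  classical
  set wt := Real.exp (-μ) with hwt
  set wf := Real.exp μ with hwf
  have hwt0 : 0 < wt := Real.exp_pos _
  have hwf0 : 0 < wf := Real.exp_pos _
  have hS0 : 0 < wt + wf := by linarith
  unfold canExp
  rw [Zcan_eq]
  have hnum : ∑ φ : Fin N → Bool, Real.exp (-μ * mag φ) * f (projB I h φ)
      = ∑ σ : Fin n → Bool, f σ * (wt^(bcount σ) * wf^(n - bcount σ) * (wt+wf)^(N-n)) := by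
    rw [← Finset.sum_fiberwise_of_maps_to (g := projB I h) (fun φ _ => Finset.mem_univ _)
      (fun φ => Real.exp (-μ * mag φ) * f (projB I h φ))]
    apply Finset.sum_congr rfl
    intro σ _
    have hinner : ∀ φ ∈ Finset.univ.filter (fun φ : Fin N → Bool => projB I h φ = σ),
        Real.exp (-μ * mag φ) * f (projB I h φ)
          = f σ * (wt^(bcount φ) * wf^(N - bcount φ)) := by
      intro φ hφ
      rw [(Finset.mem_filter.mp hφ).2, wexp]
      ring
    rw [Finset.sum_congr rfl hinner, ← Finset.mul_sum]
    congr 1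
    -- group by bcount
    rw [← Finset.sum_fiberwise_of_maps_to (g := bcount)
      (fun φ _ => Finset.mem_range.mpr (Nat.lt_succ_of_le (bcount_fin_le φ)))
      (fun φ => wt^(bcount φ) * wf^(N - bcount φ))]
    have hstep : ∀ t ∈ Finset.range (N+1),
        ∑ φ ∈ (Finset.univ.filter (fun φ : Fin N → Bool => projB I h φ = σ)).filter
            (fun φ => bcount φ = t), wt^(bcount φ) * wf^(N - bcount φ)
        = (if bcount σ ≤ t then ((N-n).choose (t - bcount σ) : ℝ) else 0) * (wt^t * wf^(N-t)) := by
      intro t _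
      have hinner2 : ∀ φ ∈ (Finset.univ.filter (fun φ : Fin N → Bool => projB I h φ = σ)).filter
          (fun φ => bcount φ = t), wt^(bcount φ) * wf^(N - bcount φ) = wt^t * wf^(N-t) := by
        intro φ hφ
        rw [(Finset.mem_filter.mp hφ).2]
      rw [Finset.sum_congr rfl hinner2, Finset.sum_const, nsmul_eq_mul]
      congr 1
      rw [Finset.filter_filter]
      have hswap : Finset.univ.filter (fun φ : Fin N → Bool => projB I h φ = σ ∧ bcount φ = t)
          = Finset.univ.filter (fun φ : Fin N → Bool => bcount φ = t ∧ projB I h φ = σ) := by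
        apply Finset.filter_congr
        intro φ _
        exact and_comm
      rw [hswap, count_fiber I h t σ]
      split <;> simp
    rw [Finset.sum_congr rfl hstep]
    exact gsum (bcount_fin_le σ) hn
  rw [hnum, Finset.sum_div]
  apply Finset.sum_congr rfl
  intro σ _
  rw [mul_div_assoc, pow_ratio (ne_of_gt hS0) (bcount_fin_le σ) hn]
  unfold Bw
  have hq : 1 - wt/(wt+wf) = wf/(wt+wf) := by field_simp; ring
  rw [hq]

lemma sum_Bw (p : ℝ) : ∀ i, ∑ σ : Fin i → Bool, Bw p σ = 1 := by
  intro i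
  induction i with
  | zero =>
    rw [Fintype.sum_unique]
    norm_num [Bw, bcount]
  | succ i ih =>
    rw [sum_cons_split]
    have : ∀ σ : Fin i → Bool, Bw p (Fin.cons true σ) + Bw p (Fin.cons false σ) = Bw p σ := by
      intro σ
      rw [Bw_cons_true, Bw_cons_false]
      ring
    rw [Finset.sum_congr rfl (fun σ _ => this σ), ih]

lemma p_artanh {m : ℝ} (hm : m ∈ Set.Ioo (-1:ℝ) 1) :
    Real.exp (-(artanh (-m))) / (Real.exp (-(artanh (-m))) + Real.exp (artanh (-m)))
      = (1+m)/2 := by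
  obtain ⟨hm1, hm2⟩ := hm
  have h1m : (0:ℝ) < 1 + m := by linarith
  have h2m : (0:ℝ) < 1 - m := by linarith
  have hs : (0:ℝ) < (1-m)/(1+m) := by positivity
  have hμ : artanh (-m) = Real.log ((1-m)/(1+m)) / 2 := by
    unfold artanh
    norm_num
    ring_nf
  set u := Real.exp (artanh (-m)) with hu
  have hu0 : 0 < u := Real.exp_pos _
  have huu : u * u = (1-m)/(1+m) := by
    rw [hu, ← Real.exp_add, hμ,
      show Real.log ((1-m)/(1+m))/2 + Real.log ((1-m)/(1+m))/2 = Real.log ((1-m)/(1+m)) by ring]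
    exact Real.exp_log hs
  rw [Real.exp_neg, ← hu]
  have hden : (0:ℝ) < u⁻¹ + u := by positivity
  rw [div_eq_div_iff (ne_of_gt hden) (by norm_num : (2:ℝ) ≠ 0)]
  have huinv : u⁻¹ = u / ((1-m)/(1+m)) := by
    rw [← huu]
    field_simp
  rw [huinv]
  field_simp
  nlinarith [huu, hu0]

lemma relEnt_eq {N k : ℕ} {m : ℝ} (hk0 : 0 < k) (hkN : k < N)
    (hmag : magSet N m = Finset.univ.filter (fun φ => bcount φ = k))
    {μ : ℝ} (hp : Real.exp (-μ) / (Real.exp (-μ) + Real.exp μ) = (k:ℝ)/N) :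
    relEnt N m μ
      = - Real.log ((N.choose k : ℝ) * ((k:ℝ)/N)^k * (1 - (k:ℝ)/N)^(N-k)) := by
  classical
  have hkN' : k ≤ N := le_of_lt hkN
  have hC : (0:ℝ) < (N.choose k : ℝ) := by exact_mod_cast Nat.choose_pos hkN'
  have hN0 : (0:ℝ) < (N:ℝ) := by
    have : 0 < N := by omega
    exact_mod_cast this
  have hp0 : 0 < (k:ℝ)/(N:ℝ) := by
    have : (0:ℝ) < (k:ℝ) := by exact_mod_cast hk0
    positivity
  have hq0 : (0:ℝ) < 1 - (k:ℝ)/(N:ℝ) := by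
    have : (k:ℝ)/(N:ℝ) < 1 := by
      rw [div_lt_one hN0]
      exact_mod_cast hkN
    linarith
  set wt := Real.exp (-μ) with hwt
  set wf := Real.exp μ with hwf
  have hwt0 : 0 < wt := Real.exp_pos _
  have hwf0 : 0 < wf := Real.exp_pos _
  have hS0 : 0 < wt + wf := by linarith
  have hqe : wf / (wt + wf) = 1 - (k:ℝ)/N := by
    rw [← hp]
    field_simp; ring
  have hcard : ((magSet N m).card : ℝ) = (N.choose k : ℝ) := by
    rw [hmag, card_bcount, Fintype.card_fin]
  have hw : ∀ φ ∈ magSet N m,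
      Real.exp (-μ * mag φ) / Zcan N μ = ((k:ℝ)/N)^k * (1 - (k:ℝ)/N)^(N-k) := by
    intro φ hφ
    have hbφ : bcount φ = k := by
      rw [hmag] at hφ
      exact (Finset.mem_filter.mp hφ).2
    rw [wexp, Zcan_eq, hbφ]
    rw [show Real.exp (-μ)^k * Real.exp μ^(N-k) / (Real.exp (-μ) + Real.exp μ)^N
        = Real.exp (-μ)^k * Real.exp μ^(N-k) * (Real.exp (-μ) + Real.exp μ)^(N-N)
          / (Real.exp (-μ) + Real.exp μ)^N by
      rw [Nat.sub_self, pow_zero, mul_one]]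
    rw [pow_ratio (ne_of_gt hS0) hkN' (le_refl N), hp, hqe]
  unfold relEnt
  have hterm : ∀ φ ∈ magSet N m,
      ((magSet N m).card : ℝ)⁻¹ *
        Real.log (((magSet N m).card : ℝ)⁻¹ / (Real.exp (-μ * mag φ) / Zcan N μ))
      = ((N.choose k : ℝ))⁻¹ *
        Real.log (((N.choose k : ℝ))⁻¹ / (((k:ℝ)/N)^k * (1 - (k:ℝ)/N)^(N-k))) := by
    intro φ hφ
    rw [hw φ hφ, hcard]
  rw [Finset.sum_congr rfl hterm, Finset.sum_const, nsmul_eq_mul]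
  have hcard2 : ((magSet N m).card : ℝ) = (N.choose k : ℝ) := hcard
  rw [hcard2]
  rw [mul_inv_cancel_left₀ (ne_of_gt hC)]
  rw [← Real.log_inv]
  congr 1
  field_simp

open Stirling in
lemma factorial_le_stirling (t : ℕ) (ht : 1 ≤ t) :
    (t.factorial : ℝ) ≤ Real.exp 1 * Real.sqrt t * ((t:ℝ)/Real.exp 1)^t := by
  have ht0 : (0:ℝ) < t := by exact_mod_cast ht
  have h1 : stirlingSeq t ≤ stirlingSeq 1 := by
    obtain ⟨s, rfl⟩ : ∃ s, t = s + 1 := ⟨t-1, by omega⟩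
    exact stirlingSeq'_antitone (Nat.zero_le s)
  rw [stirlingSeq_one] at h1
  have hd : (0:ℝ) < Real.sqrt (2*t) * ((t:ℝ)/Real.exp 1)^t := by positivity
  unfold stirlingSeq at h1
  rw [div_le_iff₀ hd] at h1
  calc (t.factorial : ℝ) ≤ Real.exp 1 / Real.sqrt 2 * (Real.sqrt (2*t) * ((t:ℝ)/Real.exp 1)^t) := h1
  _ = Real.exp 1 * Real.sqrt t * ((t:ℝ)/Real.exp 1)^t := by
      rw [Real.sqrt_mul (by norm_num : (0:ℝ) ≤ 2)]
      rw [div_mul_eq_mul_div, mul_comm (Real.sqrt 2) (Real.sqrt (t:ℝ))]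
      field_simp

open Stirling in
lemma stirling_le_factorial (t : ℕ) (ht : 1 ≤ t) :
    Real.sqrt (2*Real.pi*t) * ((t:ℝ)/Real.exp 1)^t ≤ (t.factorial : ℝ) := by
  have ht0 : (0:ℝ) < t := by exact_mod_cast ht
  have h1 : Real.sqrt Real.pi ≤ stirlingSeq t := by
    obtain ⟨s, rfl⟩ : ∃ s, t = s + 1 := ⟨t-1, by omega⟩
    exact stirlingSeq'_antitone.le_of_tendsto
      (tendsto_stirlingSeq_sqrt_pi.comp (Filter.tendsto_add_atTop_nat 1)) s
  have hd : (0:ℝ) < Real.sqrt (2*t) * ((t:ℝ)/Real.exp 1)^t := by positivity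
  unfold stirlingSeq at h1
  rw [le_div_iff₀ hd] at h1
  calc Real.sqrt (2*Real.pi*t) * ((t:ℝ)/Real.exp 1)^t
      = Real.sqrt Real.pi * (Real.sqrt (2*t) * ((t:ℝ)/Real.exp 1)^t) := by
        rw [show 2*Real.pi*(t:ℝ) = Real.pi*(2*t) by ring,
          Real.sqrt_mul Real.pi_pos.le, mul_assoc]
  _ ≤ (t.factorial : ℝ) := h1

lemma choose_pq_le {N k : ℕ} (hk0 : 0 < k) (hkN : k < N) :
    (N.choose k : ℝ) * ((k:ℝ)/N)^k * (1 - (k:ℝ)/N)^(N-k)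
      ≤ (Real.exp 1/(2*Real.pi)) * Real.sqrt ((N:ℝ)/((k:ℝ)*((N-k:ℕ):ℝ))) := by
  have hkN' : k ≤ N := le_of_lt hkN
  have hN1 : 1 ≤ N := by omega
  have hNk1 : 1 ≤ N - k := by omega
  have hkR : (0:ℝ) < (k:ℝ) := by exact_mod_cast hk0
  have hNR : (0:ℝ) < (N:ℝ) := by
    have : 0 < N := by omega
    exact_mod_cast this
  have hNkR : (0:ℝ) < ((N-k:ℕ):ℝ) := by
    have : 0 < N - k := by omega
    exact_mod_cast this
  have hq : 1 - (k:ℝ)/N = ((N-k:ℕ):ℝ)/N := by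
    rw [Nat.cast_sub hkN']
    field_simp
  rw [hq]
  have hca : (N.choose k : ℝ) = (N.factorial : ℝ)/((k.factorial : ℝ) * ((N-k).factorial : ℝ)) := by
    rw [Nat.cast_choose ℝ hkN']
  have he : (0:ℝ) < Real.exp 1 := Real.exp_pos 1
  have hπ := Real.pi_pos
  have hNf := factorial_le_stirling N hN1
  have hkf := stirling_le_factorial k hk0
  have hNkf := stirling_le_factorial (N-k) hNk1
  have hdenpos : (0:ℝ) < Real.sqrt (2*Real.pi*k) * ((k:ℝ)/Real.exp 1)^k
      * (Real.sqrt (2*Real.pi*((N-k:ℕ):ℝ)) * (((N-k:ℕ):ℝ)/Real.exp 1)^(N-k)) := by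
    positivity
  have hnum : (N.factorial : ℝ) * ((k:ℝ)/N)^k * (((N-k:ℕ):ℝ)/N)^(N-k)
      ≤ Real.exp 1 * Real.sqrt N * ((N:ℝ)/Real.exp 1)^N
        * (((k:ℝ)/N)^k * (((N-k:ℕ):ℝ)/N)^(N-k)) := by
    have h := mul_le_mul_of_nonneg_right hNf
      (show (0:ℝ) ≤ ((k:ℝ)/N)^k * (((N-k:ℕ):ℝ)/N)^(N-k) by positivity)
    calc (N.factorial : ℝ) * ((k:ℝ)/N)^k * (((N-k:ℕ):ℝ)/N)^(N-k)
        = (N.factorial : ℝ) * (((k:ℝ)/N)^k * (((N-k:ℕ):ℝ)/N)^(N-k)) := by ring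
      _ ≤ _ := h
  have hstep1 : (N.choose k : ℝ) * ((k:ℝ)/N)^k * (((N-k:ℕ):ℝ)/N)^(N-k)
      ≤ (Real.exp 1 * Real.sqrt N * ((N:ℝ)/Real.exp 1)^N
          * (((k:ℝ)/N)^k * (((N-k:ℕ):ℝ)/N)^(N-k)))
        / (Real.sqrt (2*Real.pi*k) * ((k:ℝ)/Real.exp 1)^k
          * (Real.sqrt (2*Real.pi*((N-k:ℕ):ℝ)) * (((N-k:ℕ):ℝ)/Real.exp 1)^(N-k))) := by
    rw [hca, div_mul_eq_mul_div, div_mul_eq_mul_div]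
    exact div_le_div₀ (by positivity) hnum hdenpos
      (mul_le_mul hkf hNkf (by positivity) (by positivity))
  have hprod : ((N:ℝ)/Real.exp 1)^N * (((k:ℝ)/N)^k * (((N-k:ℕ):ℝ)/N)^(N-k))
      = ((k:ℝ)/Real.exp 1)^k * (((N-k:ℕ):ℝ)/Real.exp 1)^(N-k) := by
    rw [div_pow, div_pow, div_pow, div_pow, div_pow]
    rw [show (N:ℝ)^N = (N:ℝ)^k * (N:ℝ)^(N-k) by rw [← pow_add]; congr 1; omega]
    rw [show Real.exp 1^N = Real.exp 1^k * Real.exp 1^(N-k) by rw [← pow_add]; congr 1; omega]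
    field_simp
  have hsq : Real.sqrt ((N:ℝ)/((k:ℝ)*((N-k:ℕ):ℝ)))
      * (Real.sqrt (2*Real.pi*k) * Real.sqrt (2*Real.pi*((N-k:ℕ):ℝ)))
      = 2*Real.pi*Real.sqrt N := by
    rw [← Real.sqrt_mul (by positivity), ← Real.sqrt_mul (by positivity)]
    rw [show (N:ℝ)/((k:ℝ)*((N-k:ℕ):ℝ)) * (2*Real.pi*(k:ℝ) * (2*Real.pi*((N-k:ℕ):ℝ)))
        = (2*Real.pi)^2 * N by
      rw [div_mul_eq_mul_div, div_eq_iff (by positivity)]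
      ring]
    rw [Real.sqrt_mul (by positivity), Real.sqrt_sq (by positivity : (0:ℝ) ≤ 2*Real.pi)]
  have hfin : (Real.exp 1 * Real.sqrt N * ((N:ℝ)/Real.exp 1)^N
        * (((k:ℝ)/N)^k * (((N-k:ℕ):ℝ)/N)^(N-k)))
        / (Real.sqrt (2*Real.pi*k) * ((k:ℝ)/Real.exp 1)^k
          * (Real.sqrt (2*Real.pi*((N-k:ℕ):ℝ)) * (((N-k:ℕ):ℝ)/Real.exp 1)^(N-k)))
      = (Real.exp 1/(2*Real.pi)) * Real.sqrt ((N:ℝ)/((k:ℝ)*((N-k:ℕ):ℝ))) := by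
    rw [mul_assoc (Real.exp 1 * Real.sqrt N), hprod]
    rw [div_eq_iff (ne_of_gt hdenpos)]
    have expand : Real.exp 1 / (2*Real.pi) * Real.sqrt ((N:ℝ)/((k:ℝ)*((N-k:ℕ):ℝ)))
        * (Real.sqrt (2*Real.pi*k) * ((k:ℝ)/Real.exp 1)^k
          * (Real.sqrt (2*Real.pi*((N-k:ℕ):ℝ)) * (((N-k:ℕ):ℝ)/Real.exp 1)^(N-k)))
        = Real.exp 1 / (2*Real.pi)
          * (Real.sqrt ((N:ℝ)/((k:ℝ)*((N-k:ℕ):ℝ)))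
            * (Real.sqrt (2*Real.pi*k) * Real.sqrt (2*Real.pi*((N-k:ℕ):ℝ))))
          * (((k:ℝ)/Real.exp 1)^k * (((N-k:ℕ):ℝ)/Real.exp 1)^(N-k)) := by ring
    rw [expand, hsq]
    field_simp
  rw [← hfin]
  exact hstep1

theorem stmt7 (m : ℝ) (hm : m ∈ Set.Ioo (-1 : ℝ) 1)
    (n : ℕ) (hn : 0 < n) (f : (Fin n → Bool) → ℝ) :
    -- (i) relative entropy bound on the difference of local expectations
    (∀ N : ℕ, n ≤ N → ∀ I : Finset (Fin N), ∀ h : I.card = n,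
      (∃ φ : Fin N → Bool, mag φ / N = m) →
        |mcExp N m (fun φ => f (projB I h φ)) -
            canExp N (artanh (-m)) (fun φ => f (projB I h φ))| ≤
          Real.sqrt (2 * n) *
            (Finset.univ.sup' Finset.univ_nonempty fun σ : Fin n → Bool => |f σ|) *
            Real.sqrt (Real.log (N + 1) / N)) ∧
    -- (ii) the logarithmic factor cannot be removed with this bound
    (∃ N₀ : ℕ, ∀ N : ℕ, N₀ ≤ N →
      (∃ φ : Fin N → Bool, mag φ / N = m) →
        Real.log (N + 1) / (4 * N) ≤ relEnt N m (artanh (-m)) / N) := by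
  constructor
  · -- part (i)
    intro N hnN I h hex
    obtain ⟨φ₀, hφ₀⟩ := hex
    have hN0 : 0 < N := lt_of_lt_of_le hn hnN
    have hNR : (0:ℝ) < N := by exact_mod_cast hN0
    obtain ⟨hk0, hkN⟩ := k_bounds hm hN0 hφ₀
    set k := bcount φ₀ with hkdef
    have hmag := magSet_eq hN0 hφ₀
    have hpk : (k:ℝ)/N = (1+m)/2 := p_ident hN0 hφ₀
    have hBarg : Real.exp (-(artanh (-m)))
        / (Real.exp (-(artanh (-m))) + Real.exp (artanh (-m))) = (k:ℝ)/N := by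
      rw [p_artanh hm, hpk]
    rw [mc_sum I h f (le_of_lt hkN) hmag, can_sum I h f (artanh (-m)) hnN, hBarg]
    have hkRpos : (0:ℝ) < (k:ℝ) := by exact_mod_cast hk0
    have hp0 : 0 < (k:ℝ)/N := by positivity
    have hp1 : (k:ℝ)/N < 1 := by
      rw [div_lt_one hNR]
      exact_mod_cast hkN
    set F := Finset.univ.sup' Finset.univ_nonempty (fun σ : Fin n → Bool => |f σ|) with hFdef
    have hFb : ∀ σ : Fin n → Bool, |f σ| ≤ F :=
      fun σ => Finset.le_sup' (fun σ : Fin n → Bool => |f σ|) (Finset.mem_univ σ)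
    have hF0 : 0 ≤ F := le_trans (abs_nonneg _) (hFb (fun _ => true))
    have hdiff : (∑ σ : Fin n → Bool, f σ * Aw N k n σ)
        - (∑ σ : Fin n → Bool, f σ * Bw ((k:ℝ)/N) σ)
        = ∑ σ : Fin n → Bool, f σ * (Aw N k n σ - Bw ((k:ℝ)/N) σ) := by
      rw [← Finset.sum_sub_distrib]
      apply Finset.sum_congr rfl
      intros
      ring
    rw [hdiff]
    have h1 : |∑ σ : Fin n → Bool, f σ * (Aw N k n σ - Bw ((k:ℝ)/N) σ)|
        ≤ F * ∑ σ : Fin n → Bool, |Aw N k n σ - Bw ((k:ℝ)/N) σ| := by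
      rw [Finset.mul_sum]
      refine le_trans (Finset.abs_sum_le_sum_abs _ _) (Finset.sum_le_sum fun σ _ => ?_)
      rw [abs_mul]
      exact mul_le_mul_of_nonneg_right (hFb σ) (abs_nonneg _)
    have hpin := pinsker (Aw N k n) (Bw ((k:ℝ)/N))
      (Aw_nonneg N k n)
      (fun σ => by
        unfold Bw
        have hq1 : 0 < 1 - (k:ℝ)/N := by linarith
        exact mul_pos (pow_pos hp0 _) (pow_pos hq1 _))
      (sum_Aw N k (le_of_lt hkN) n hnN) (sum_Bw ((k:ℝ)/N) n)
    have hDle : Dk N k n ≤ (n:ℝ) * Real.log ((N:ℝ)+1) / N := by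
      have h2 := Dk_convex_ratio N k hk0 hkN hnN
      have h3 := Dk_N_le N k hk0 hkN
      have h4 : (n:ℝ) * Dk N k N ≤ (n:ℝ) * Real.log ((N:ℝ)+1) :=
        mul_le_mul_of_nonneg_left h3 (Nat.cast_nonneg n)
      rw [le_div_iff₀ hNR]
      nlinarith
    have hDform : ∑ σ : Fin n → Bool,
        Aw N k n σ * Real.log (Aw N k n σ / Bw ((k:ℝ)/N) σ) = Dk N k n := rfl
    rw [hDform] at hpin
    have hsq2 : (∑ σ : Fin n → Bool, |Aw N k n σ - Bw ((k:ℝ)/N) σ|)^2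
        ≤ (2*(n:ℝ)) * (Real.log ((N:ℝ)+1) / N) := by
      calc (∑ σ : Fin n → Bool, |Aw N k n σ - Bw ((k:ℝ)/N) σ|)^2
          ≤ 2 * Dk N k n := hpin
        _ ≤ (2*(n:ℝ)) * (Real.log ((N:ℝ)+1) / N) := by
            rw [show (2*(n:ℝ)) * (Real.log ((N:ℝ)+1) / N)
              = 2 * ((n:ℝ) * Real.log ((N:ℝ)+1) / N) by ring]
            linarith
    have hnn : 0 ≤ ∑ σ : Fin n → Bool, |Aw N k n σ - Bw ((k:ℝ)/N) σ| :=
      Finset.sum_nonneg (fun σ _ => abs_nonneg _)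
    have hT : ∑ σ : Fin n → Bool, |Aw N k n σ - Bw ((k:ℝ)/N) σ|
        ≤ Real.sqrt ((2*(n:ℝ)) * (Real.log ((N:ℝ)+1) / N)) := by
      have := Real.sqrt_le_sqrt hsq2
      rwa [Real.sqrt_sq hnn] at this
    calc |∑ σ : Fin n → Bool, f σ * (Aw N k n σ - Bw ((k:ℝ)/N) σ)|
        ≤ F * ∑ σ : Fin n → Bool, |Aw N k n σ - Bw ((k:ℝ)/N) σ| := h1
      _ ≤ F * Real.sqrt ((2*(n:ℝ)) * (Real.log ((N:ℝ)+1) / N)) :=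
          mul_le_mul_of_nonneg_left hT hF0
      _ = Real.sqrt (2*(n:ℝ)) * F * Real.sqrt (Real.log ((N:ℝ)+1) / N) := by
          rw [Real.sqrt_mul (by positivity : (0:ℝ) ≤ 2*(n:ℝ))]
          ring
  · -- part (ii)
    obtain ⟨hm1, hm2⟩ := hm
    have h1m2 : (0:ℝ) < 1 - m^2 := by nlinarith
    set c₀ := Real.log (Real.exp 1 / (Real.pi * Real.sqrt (1-m^2))) with hc₀
    refine ⟨⌈Real.exp (4*c₀+1)⌉₊ + 1, ?_⟩
    intro N hN hex
    obtain ⟨φ₀, hφ₀⟩ := hex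
    have hN0 : 0 < N := by omega
    have hNR : (0:ℝ) < N := by exact_mod_cast hN0
    have hN1R : (1:ℝ) ≤ N := by exact_mod_cast hN0
    obtain ⟨hk0, hkN⟩ := k_bounds ⟨hm1, hm2⟩ hN0 hφ₀
    set k := bcount φ₀ with hkdef
    have hmag := magSet_eq hN0 hφ₀
    have hpk : (k:ℝ)/N = (1+m)/2 := p_ident hN0 hφ₀
    have hrel := relEnt_eq hk0 hkN hmag (by rw [p_artanh ⟨hm1, hm2⟩, hpk])
    have hml := mode_ge hk0 hkN
    set X := (N.choose k : ℝ) * ((k:ℝ)/N)^k * (1 - (k:ℝ)/N)^(N-k) with hXdef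
    have hX0 : 0 < X := lt_of_lt_of_le (by positivity) hml
    have hup := choose_pq_le hk0 hkN
    have hkR : (k:ℝ) = N*(1+m)/2 := by
      have := (div_eq_iff (ne_of_gt hNR)).mp hpk
      linarith [this]
    have hNkR : ((N-k:ℕ):ℝ) = N*(1-m)/2 := by
      rw [Nat.cast_sub (le_of_lt hkN), hkR]
      ring
    have hsq2 : Real.sqrt ((N:ℝ)/((k:ℝ)*((N-k:ℕ):ℝ)))
        = 2/(Real.sqrt N * Real.sqrt (1-m^2)) := by
      rw [hkR, hNkR]
      have hprodpos : (0:ℝ) < ((N:ℝ)*(1+m)/2)*((N:ℝ)*(1-m)/2) := by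
        have ha : (0:ℝ) < 1+m := by linarith
        have hb : (0:ℝ) < 1-m := by linarith
        have := mul_pos (mul_pos hNR ha) (mul_pos hNR hb)
        nlinarith
      have hNm2 : (0:ℝ) < (N:ℝ)*(1-m^2) := mul_pos hNR h1m2
      rw [show (N:ℝ)/((N*(1+m)/2)*(N*(1-m)/2)) = 2^2/((N:ℝ)*(1-m^2)) by
        rw [div_eq_div_iff (ne_of_gt hprodpos) (ne_of_gt hNm2)]
        ring]
      rw [show ((2:ℝ)^2)/((N:ℝ)*(1-m^2)) = 2^2 * ((N:ℝ)*(1-m^2))⁻¹ by ring]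
      rw [Real.sqrt_mul (by positivity), Real.sqrt_sq (by norm_num : (0:ℝ) ≤ 2)]
      rw [Real.sqrt_inv, Real.sqrt_mul hNR.le]
      ring
    have hupper : X ≤ Real.exp c₀ / Real.sqrt N := by
      have hec₀ : Real.exp c₀ = Real.exp 1 / (Real.pi * Real.sqrt (1-m^2)) := by
        rw [hc₀]
        exact Real.exp_log (by positivity)
      have hπ := Real.pi_pos
      calc X ≤ (Real.exp 1/(2*Real.pi)) * Real.sqrt ((N:ℝ)/((k:ℝ)*((N-k:ℕ):ℝ))) := hup
        _ = Real.exp c₀ / Real.sqrt N := by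
            rw [hsq2, hec₀]
            have hsN : (0:ℝ) < Real.sqrt N := Real.sqrt_pos.mpr hNR
            have hsm : (0:ℝ) < Real.sqrt (1-m^2) := Real.sqrt_pos.mpr h1m2
            field_simp
    have hrel2 : Real.log X ≤ c₀ - Real.log N / 2 := by
      have hlog := Real.log_le_log hX0 hupper
      rwa [Real.log_div (Real.exp_ne_zero _) (ne_of_gt (Real.sqrt_pos.mpr hNR)),
        Real.log_exp, Real.log_sqrt hNR.le] at hlog
    have hlogN : 4*c₀ + 1 ≤ Real.log N := by
      have h5 : Real.exp (4*c₀+1) ≤ (N:ℝ) := by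
        calc Real.exp (4*c₀+1) ≤ (⌈Real.exp (4*c₀+1)⌉₊ : ℝ) := Nat.le_ceil _
          _ ≤ N := by
              have : ⌈Real.exp (4*c₀+1)⌉₊ ≤ N := by omega
              exact_mod_cast this
      calc 4*c₀ + 1 = Real.log (Real.exp (4*c₀+1)) := (Real.log_exp _).symm
        _ ≤ Real.log N := Real.log_le_log (Real.exp_pos _) h5
    have hlogN1 : Real.log ((N:ℝ)+1) ≤ Real.log 2 + Real.log N := by
      calc Real.log ((N:ℝ)+1) ≤ Real.log (2*N) :=
          Real.log_le_log (by positivity) (by linarith)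
        _ = Real.log 2 + Real.log N := Real.log_mul (by norm_num) (ne_of_gt hNR)
    have hlog2 : Real.log 2 ≤ 1 := by
      have := Real.log_le_sub_one_of_pos (by norm_num : (0:ℝ) < 2)
      linarith
    have hfinal : Real.log ((N:ℝ)+1)/4 ≤ relEnt N m (artanh (-m)) := by
      rw [hrel]
      linarith
    rw [show Real.log ((N:ℝ)+1)/(4*(N:ℝ)) = (Real.log ((N:ℝ)+1)/4)/N by ring]
    exact (div_le_div_iff_of_pos_right hNR).mpr hfinal
end

section
/- Let m ∈ (−1,1) and μ := arctanh(−m). Let I be a finite nonempty index set and let f : {−1,1}^{|I|} → ℝ be bounded and 1-Lipschitz with respect to the ℓ¹-norm on ℝ^{|I|}. Then for every finite set Λ with N := |Λ| > |I| such that m lies in the range of m_N, |∫ f∘P_I dμ_MC^{m;N} − ∫ f∘P_I dμ_C^{μ;N}| ≤ (|I| / (1 − |I|/N)) · √(1 − m²) · N^{−1/2}. In particular the difference of local expectations is O(N^{−1/2}) as N → ∞. -/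
/-- The embedding of a spin value into `ℝ`. -/
noncomputable def spin (b : Bool) : ℝ := if b then 1 else -1

namespace Stmt8

noncomputable def cc (N K t k : ℕ) : ℝ := if k ≤ K then ((N - t).choose (K - k) : ℝ) else 0

def cnt {n : ℕ} (t : ℕ) (a : Fin n → Bool) : ℕ := ∑ j : Fin n, if j.1 < t ∧ a j then 1 else 0

noncomputable def wt (p : ℝ) (b : Bool) : ℝ := if b then p else 1 - p

noncomputable def tl (p : ℝ) {n : ℕ} (t : ℕ) (a : Fin n → Bool) : ℝ :=
  ∏ j ∈ Finset.univ.filter (fun j : Fin n => t ≤ j.1), wt p (a j)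

lemma cc_nonneg (N K t k : ℕ) : 0 ≤ cc N K t k := by
  unfold cc; split <;> positivity

lemma cc_pascal {N K : ℕ} (t k : ℕ) (htN : t < N) :
    cc N K t k = cc N K (t+1) k + cc N K (t+1) (k+1) := by
  unfold cc
  rcases lt_trichotomy k K with hk | hk | hk
  · rw [if_pos hk.le, if_pos hk.le, if_pos (by omega : k+1 ≤ K)]
    have key : (N - t).choose (K - k) = (N - (t+1)).choose (K - k) + (N - (t+1)).choose (K - (k+1)) := by
      obtain ⟨s, hs⟩ : ∃ s, N - (t+1) = s := ⟨_, rfl⟩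
      obtain ⟨r, hr⟩ : ∃ r, K - (k+1) = r := ⟨_, rfl⟩
      have h1 : N - t = s + 1 := by omega
      have h2 : K - k = r + 1 := by omega
      have h3 : K - (k+1) = r := hr
      rw [h1, h2, hs, h3, Nat.choose_succ_succ, Nat.add_comm]
    rw [key]; push_cast; ring
  · subst hk
    rw [if_pos le_rfl, if_pos le_rfl, if_neg (by omega)]
    simp
  · rw [if_neg (by omega), if_neg (by omega), if_neg (by omega)]
    simp

lemma cc_ratio {N K : ℕ} (t k : ℕ) (htN : t < N) :
    ((N : ℝ) - t) * cc N K (t+1) (k+1) = ((K : ℝ) - k) * cc N K t k := by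
  unfold cc
  rcases lt_trichotomy k K with hk | hk | hk
  · rw [if_pos (by omega : k+1 ≤ K), if_pos hk.le]
    have key : (N - t) * ((N - (t+1)).choose (K - (k+1))) = (K - k) * ((N - t).choose (K - k)) := by
      obtain ⟨s, hs⟩ : ∃ s, N - (t+1) = s := ⟨_, rfl⟩
      obtain ⟨r, hr⟩ : ∃ r, K - (k+1) = r := ⟨_, rfl⟩
      have h1 : N - t = s + 1 := by omega
      have h2 : K - k = r + 1 := by omega
      rw [h1, h2, hs, hr]
      calc (s+1) * (s.choose r) = (s+1).choose (r+1) * (r+1) := Nat.add_one_mul_choose_eq s r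
        _ = (r+1) * ((s+1).choose (r+1)) := Nat.mul_comm _ _
    have hc1 : ((N:ℝ) - t) = ((N - t : ℕ) : ℝ) := by
      rw [Nat.cast_sub htN.le]
    have hc2 : ((K:ℝ) - k) = ((K - k : ℕ) : ℝ) := by
      rw [Nat.cast_sub hk.le]
    rw [hc1, hc2, ← Nat.cast_mul, ← Nat.cast_mul, key]
  · subst hk
    rw [if_neg (by omega), if_pos le_rfl]
    simp
  · rw [if_neg (by omega), if_neg (by omega)]
    simp

lemma cnt_zero {n : ℕ} (a : Fin n → Bool) : cnt 0 a = 0 := by simp [cnt]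

lemma cnt_update {n t : ℕ} (a : Fin n → Bool) (j : Fin n) (ht : t ≤ j.1) (b : Bool) :
    cnt t (Function.update a j b) = cnt t a := by
  unfold cnt
  refine Finset.sum_congr rfl fun i _ => ?_
  by_cases hij : i = j
  · subst hij; simp [Nat.not_lt.mpr ht]
  · simp [Function.update_of_ne hij]

lemma cnt_succ {n t : ℕ} (ht : t < n) (a : Fin n → Bool) :
    cnt (t+1) a = cnt t a + (if a ⟨t, ht⟩ then 1 else 0) := by
  unfold cnt
  have key : ∀ j : Fin n, (if j.1 < t+1 ∧ a j then (1:ℕ) else 0)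
      = (if j.1 < t ∧ a j then 1 else 0) + (if j = ⟨t, ht⟩ then (if a j then 1 else 0) else 0) := by
    intro j
    by_cases haj : a j
    · by_cases hjt : j = ⟨t, ht⟩
      · subst hjt; simp [haj]
      · have hne : j.1 ≠ t := fun hc => hjt (Fin.ext hc)
        simp only [haj, and_true, if_neg hjt, Nat.add_zero]
        split_ifs <;> omega
    · simp [haj]
  rw [Finset.sum_congr rfl fun j _ => key j, Finset.sum_add_distrib,
    Finset.sum_ite_eq' Finset.univ (⟨t, ht⟩ : Fin n)]
  simp

lemma cnt_le {n t : ℕ} (a : Fin n → Bool) : cnt t a ≤ n := by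
  unfold cnt
  calc ∑ j : Fin n, (if j.1 < t ∧ a j then (1:ℕ) else 0) ≤ ∑ _j : Fin n, 1 :=
        Finset.sum_le_sum (fun j _ => by split <;> omega)
    _ = n := by simp

lemma tl_update {n t : ℕ} (p : ℝ) (a : Fin n → Bool) (j : Fin n) (hj : j.1 < t) (b : Bool) :
    tl p t (Function.update a j b) = tl p t a := by
  unfold tl
  refine Finset.prod_congr rfl fun i hi => ?_
  have hne : i ≠ j := by
    rintro rfl; simp only [Finset.mem_filter] at hi; omega
  simp [Function.update_of_ne hne]

lemma tl_succ {n t : ℕ} (p : ℝ) (ht : t < n) (a : Fin n → Bool) :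
    tl p t a = wt p (a ⟨t, ht⟩) * tl p (t+1) a := by
  unfold tl
  have hset : Finset.univ.filter (fun j : Fin n => t ≤ j.1)
      = insert ⟨t, ht⟩ (Finset.univ.filter (fun j : Fin n => t+1 ≤ j.1)) := by
    ext j
    simp only [Finset.mem_filter, Finset.mem_univ, true_and, Finset.mem_insert, Fin.ext_iff]
    omega
  rw [hset, Finset.prod_insert (by simp)]

lemma tl_top {n t : ℕ} (p : ℝ) (hnt : n ≤ t) (a : Fin n → Bool) : tl p t a = 1 := by
  unfold tl
  rw [Finset.filter_false_of_mem, Finset.prod_empty]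
  intro j _
  have := j.2
  omega

lemma tl_nonneg {n t : ℕ} {p : ℝ} (hp : 0 ≤ p) (hp1 : p ≤ 1) (a : Fin n → Bool) :
    0 ≤ tl p t a := by
  unfold tl
  refine Finset.prod_nonneg fun j _ => ?_
  unfold wt; split <;> linarith

lemma half {n : ℕ} (j : Fin n) (F : (Fin n → Bool) → ℝ) :
    ∑ a : Fin n → Bool, F a
      = (1/2) * ∑ a : Fin n → Bool, (F (Function.update a j false) + F (Function.update a j true)) := by
  have hinv : Function.Involutive (fun a : Fin n → Bool => Function.update a j (!(a j))) := by
    intro a; funext i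
    by_cases hij : i = j
    · subst hij; simp
    · simp [Function.update_of_ne hij]
  have hpt : ∀ a : Fin n → Bool,
      F (Function.update a j false) + F (Function.update a j true)
        = F a + F (Function.update a j (!(a j))) := by
    intro a
    cases h : a j
    · have h1 : Function.update a j false = a := by rw [Function.update_eq_self_iff]; exact h.symm
      rw [h1]
      simp only [Bool.not_false]
    · have h1 : Function.update a j true = a := by rw [Function.update_eq_self_iff]; exact h.symm
      rw [h1]
      simp only [Bool.not_true]
      ring
  have hcomp : ∑ a : Fin n → Bool, F (Function.update a j (!(a j))) = ∑ a : Fin n → Bool, F a := by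
    have := Equiv.sum_comp hinv.toPerm F
    simpa [Function.Involutive.coe_toPerm] using this
  rw [Finset.sum_congr rfl fun a _ => hpt a, Finset.sum_add_distrib, hcomp]
  ring

lemma wt_true (p : ℝ) : wt p true = p := rfl
lemma wt_false (p : ℝ) : wt p false = 1 - p := rfl

lemma cc_ratio' {N K : ℕ} (t k : ℕ) (htN : t < N) :
    cc N K (t+1) (k+1) = ((K : ℝ) - k) * cc N K t k / ((N : ℝ) - t) := by
  have hD : ((N:ℝ) - t) ≠ 0 := by
    have : (t:ℝ) < N := by exact_mod_cast htN
    linarith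
  rw [eq_div_iff hD, mul_comm (cc N K (t+1) (k+1)) _, cc_ratio t k htN]

lemma stepF {N K n : ℕ} (p : ℝ) (f : (Fin n → Bool) → ℝ) (t : ℕ) (ht : t < n) (htN : t < N) :
    (∑ a : Fin n → Bool, cc N K (t+1) (cnt (t+1) a) * tl p (t+1) a * f a)
      - (∑ a : Fin n → Bool, cc N K t (cnt t a) * tl p t a * f a)
    = (1/2) * ∑ a : Fin n → Bool, tl p (t+1) a
        * (cc N K (t+1) (cnt t a + 1) - p * cc N K t (cnt t a))
        * (f (Function.update a ⟨t, ht⟩ true) - f (Function.update a ⟨t, ht⟩ false)) := by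
  set jt : Fin n := ⟨t, ht⟩ with hjt
  rw [half jt (fun a => cc N K (t+1) (cnt (t+1) a) * tl p (t+1) a * f a),
      half jt (fun a => cc N K t (cnt t a) * tl p t a * f a),
      ← mul_sub, ← Finset.sum_sub_distrib]
  congr 1
  refine Finset.sum_congr rfl fun a _ => ?_
  have hcntu : ∀ b, cnt t (Function.update a jt b) = cnt t a := fun b => cnt_update a jt le_rfl b
  have hcnt1 : ∀ b, cnt (t+1) (Function.update a jt b) = cnt t a + (if b then 1 else 0) := by
    intro b
    rw [cnt_succ ht, Function.update_self, hcntu]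
  have htl1 : ∀ b, tl p (t+1) (Function.update a jt b) = tl p (t+1) a :=
    fun b => tl_update p a jt (Nat.lt_succ_self t) b
  have htl0 : ∀ b, tl p t (Function.update a jt b) = wt p b * tl p (t+1) a := by
    intro b
    rw [tl_succ p ht, Function.update_self, htl1]
  rw [hcnt1 false, hcnt1 true, htl1 false, htl1 true, htl0 false, htl0 true,
      hcntu false, hcntu true]
  simp only [wt_true, wt_false]
  norm_num
  rw [cc_pascal t (cnt t a) htN]
  ring

lemma stepG {N K n : ℕ} (p : ℝ) (G : ℕ → ℝ) (t : ℕ) (ht : t < n) (htN : t < N) :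
    (∑ a : Fin n → Bool, cc N K (t+1) (cnt (t+1) a) * tl p (t+1) a * G (cnt (t+1) a))
    = (∑ a : Fin n → Bool, cc N K t (cnt t a) * tl p t a * G (cnt t a))
      + (1/2) * ∑ a : Fin n → Bool,
          tl p (t+1) a * (cc N K (t+1) (cnt t a + 1) * (G (cnt t a + 1) - G (cnt t a))) := by
  set jt : Fin n := ⟨t, ht⟩ with hjt
  rw [half jt (fun a => cc N K (t+1) (cnt (t+1) a) * tl p (t+1) a * G (cnt (t+1) a)),
      half jt (fun a => cc N K t (cnt t a) * tl p t a * G (cnt t a)),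
      ← mul_add, ← Finset.sum_add_distrib]
  congr 1
  refine Finset.sum_congr rfl fun a _ => ?_
  have hcntu : ∀ b, cnt t (Function.update a jt b) = cnt t a := fun b => cnt_update a jt le_rfl b
  have hcnt1 : ∀ b, cnt (t+1) (Function.update a jt b) = cnt t a + (if b then 1 else 0) := by
    intro b
    rw [cnt_succ ht, Function.update_self, hcntu]
  have htl1 : ∀ b, tl p (t+1) (Function.update a jt b) = tl p (t+1) a :=
    fun b => tl_update p a jt (Nat.lt_succ_self t) b
  have htl0 : ∀ b, tl p t (Function.update a jt b) = wt p b * tl p (t+1) a := by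
    intro b
    rw [tl_succ p ht, Function.update_self, htl1]
  rw [hcnt1 false, hcnt1 true, htl1 false, htl1 true, htl0 false, htl0 true,
      hcntu false, hcntu true]
  simp only [wt_true, wt_false]
  norm_num
  rw [cc_pascal t (cnt t a) htN]
  ring

lemma halfX {n : ℕ} (p : ℝ) (X : ℕ → ℝ) (t : ℕ) (ht : t < n) :
    ∑ a : Fin n → Bool, tl p (t+1) a * X (cnt t a)
      = 2 * ∑ a : Fin n → Bool, tl p t a * X (cnt t a) := by
  set jt : Fin n := ⟨t, ht⟩ with hjt
  rw [half jt (fun a => tl p t a * X (cnt t a))]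
  rw [show (2:ℝ) * ((1/2) * ∑ a : Fin n → Bool,
      (tl p t (Function.update a jt false) * X (cnt t (Function.update a jt false))
        + tl p t (Function.update a jt true) * X (cnt t (Function.update a jt true))))
    = ∑ a : Fin n → Bool,
      (tl p t (Function.update a jt false) * X (cnt t (Function.update a jt false))
        + tl p t (Function.update a jt true) * X (cnt t (Function.update a jt true))) from by ring]
  refine Finset.sum_congr rfl fun a _ => ?_
  have hcntu : ∀ b, cnt t (Function.update a jt b) = cnt t a := fun b => cnt_update a jt le_rfl b
  have htl1 : ∀ b, tl p (t+1) (Function.update a jt b) = tl p (t+1) a :=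
    fun b => tl_update p a jt (Nat.lt_succ_self t) b
  have htl0 : ∀ b, tl p t (Function.update a jt b) = wt p b * tl p (t+1) a := by
    intro b
    rw [tl_succ p ht, Function.update_self, htl1]
  rw [hcntu false, hcntu true, htl0 false, htl0 true, wt_true, wt_false]
  ring

lemma sum_tl_zero {n : ℕ} (p : ℝ) : ∑ a : Fin n → Bool, tl p 0 a = 1 := by
  have h1 : ∀ a : Fin n → Bool, tl p 0 a = ∏ j : Fin n, wt p (a j) := by
    intro a; unfold tl
    rw [Finset.filter_true_of_mem (fun j _ => Nat.zero_le _)]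
  rw [Finset.sum_congr rfl fun a _ => h1 a]
  have h2 := Finset.prod_univ_sum (fun _ : Fin n => (Finset.univ : Finset Bool)) (fun _ b => wt p b)
  rw [Fintype.piFinset_univ] at h2
  rw [← h2]
  have h3 : ∑ b : Bool, wt p b = 1 := by
    rw [Fintype.sum_bool, wt_true, wt_false]; ring
  rw [Finset.prod_congr rfl fun j _ => h3, Finset.prod_const_one]

lemma M0 {N K n : ℕ} (p : ℝ) (hnN : n < N) :
    ∀ t, t ≤ n → ∑ a : Fin n → Bool, cc N K t (cnt t a) * tl p t a = (N.choose K : ℝ) := by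
  intro t
  induction t with
  | zero =>
    intro _
    have h1 : ∀ a : Fin n → Bool, cc N K 0 (cnt 0 a) * tl p 0 a = (N.choose K : ℝ) * tl p 0 a := by
      intro a; rw [cnt_zero]; unfold cc
      rw [if_pos (Nat.zero_le K)]
      norm_num
    rw [Finset.sum_congr rfl fun a _ => h1 a, ← Finset.mul_sum, sum_tl_zero, mul_one]
  | succ t ih =>
    intro ht1
    have ht : t < n := by omega
    have htN : t < N := by omega
    have hs := stepG (N := N) (K := K) p (fun _ => (1:ℝ)) t ht htN
    simp only [mul_one, sub_self, mul_zero, Finset.sum_const_zero, add_zero] at hs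
    rw [hs, ih (by omega)]

lemma M1 {N K n : ℕ} (p : ℝ) (hnN : n < N) (hKp : (K:ℝ) = p * N) :
    ∀ t, t ≤ n → ∑ a : Fin n → Bool, cc N K t (cnt t a) * tl p t a * (cnt t a : ℝ)
      = (N.choose K : ℝ) * p * t := by
  intro t
  induction t with
  | zero =>
    intro _
    simp [cnt_zero]
  | succ t ih =>
    intro ht1
    have ht : t < n := by omega
    have htN : t < N := by omega
    have hD : ((N:ℝ) - t) ≠ 0 := by
      have : (t:ℝ) < N := by exact_mod_cast htN
      linarith
    have hs := stepG (N := N) (K := K) p (fun k => (k:ℝ)) t ht htN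
    simp only [Nat.cast_add, Nat.cast_one, add_sub_cancel_left, mul_one] at hs
    rw [hs, ih (by omega)]
    have e1 : ∑ a : Fin n → Bool, tl p (t+1) a * cc N K (t+1) (cnt t a + 1)
        = 2 * ∑ a : Fin n → Bool, tl p t a * cc N K (t+1) (cnt t a + 1) :=
      halfX p (fun k => cc N K (t+1) (k+1)) t ht
    rw [e1]
    have e2 : ∑ a : Fin n → Bool, tl p t a * cc N K (t+1) (cnt t a + 1)
        = ((K:ℝ) * (∑ a : Fin n → Bool, cc N K t (cnt t a) * tl p t a)
            - (∑ a : Fin n → Bool, cc N K t (cnt t a) * tl p t a * (cnt t a : ℝ))) / ((N:ℝ) - t) := by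
      rw [Finset.mul_sum, ← Finset.sum_sub_distrib, Finset.sum_div]
      refine Finset.sum_congr rfl fun a _ => ?_
      rw [cc_ratio' t (cnt t a) htN]
      field_simp
    rw [e2, M0 p hnN t (by omega), ih (by omega), hKp]
    field_simp
    push_cast
    ring

lemma M2 {N K n : ℕ} (p : ℝ) (hnN : n < N) (hKp : (K:ℝ) = p * N)
    (hp : 0 ≤ p) (hp1 : p ≤ 1) :
    ∀ t, t ≤ n → ∑ a : Fin n → Bool, cc N K t (cnt t a) * tl p t a * (cnt t a : ℝ)^2
      ≤ (N.choose K : ℝ) * (p^2 * t^2 + p * (1-p) * t) := by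
  intro t
  induction t with
  | zero =>
    intro _
    simp [cnt_zero]
  | succ t ih =>
    intro ht1
    have ht : t < n := by omega
    have htN : t < N := by omega
    have htN2 : (t:ℝ) + 2 ≤ N := by
      have : t + 2 ≤ N := by omega
      exact_mod_cast this
    have hD : (0:ℝ) < (N:ℝ) - t := by linarith
    have hC : (0:ℝ) ≤ (N.choose K : ℝ) := Nat.cast_nonneg _
    have ht0 : (0:ℝ) ≤ t := Nat.cast_nonneg _
    have hs := stepG (N := N) (K := K) p (fun k => (k:ℝ)^2) t ht htN
    rw [hs]
    have e1 : ∑ a : Fin n → Bool,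
        tl p (t+1) a * (cc N K (t+1) (cnt t a + 1) * (((cnt t a + 1 : ℕ):ℝ)^2 - ((cnt t a : ℕ):ℝ)^2))
        = 2 * ∑ a : Fin n → Bool,
            tl p t a * (cc N K (t+1) (cnt t a + 1) * (((cnt t a + 1 : ℕ):ℝ)^2 - ((cnt t a : ℕ):ℝ)^2)) :=
      halfX p (fun k => cc N K (t+1) (k+1) * (((k+1 : ℕ):ℝ)^2 - ((k : ℕ):ℝ)^2)) t ht
    rw [e1]
    have e2 : ∑ a : Fin n → Bool,
        tl p t a * (cc N K (t+1) (cnt t a + 1) * (((cnt t a + 1 : ℕ):ℝ)^2 - ((cnt t a : ℕ):ℝ)^2))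
        = ((2*(K:ℝ) - 1) * (∑ a : Fin n → Bool, cc N K t (cnt t a) * tl p t a * (cnt t a : ℝ))
            + (K:ℝ) * (∑ a : Fin n → Bool, cc N K t (cnt t a) * tl p t a)
            - 2 * (∑ a : Fin n → Bool, cc N K t (cnt t a) * tl p t a * (cnt t a : ℝ)^2)) / ((N:ℝ) - t) := by
      rw [Finset.mul_sum, Finset.mul_sum, Finset.mul_sum, ← Finset.sum_add_distrib,
        ← Finset.sum_sub_distrib, Finset.sum_div]
      refine Finset.sum_congr rfl fun a _ => ?_
      rw [cc_ratio' t (cnt t a) htN]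
      push_cast
      field_simp
      ring
    rw [e2, M0 p hnN t (by omega), M1 p hnN hKp t (by omega), hKp]
    set S2v := ∑ a : Fin n → Bool, cc N K t (cnt t a) * tl p t a * (cnt t a : ℝ)^2 with hS2v
    set C := (N.choose K : ℝ) with hCdef
    have ihv : S2v ≤ C * (p^2 * t^2 + p * (1-p) * t) := ih (by omega)
    have key : S2v + (1/2) * (2 * (((2*(p*(N:ℝ)) - 1) * (C * p * t) + (p*(N:ℝ)) * C - 2 * S2v) / ((N:ℝ) - t)))
        ≤ C * (p^2 * ((t:ℝ)+1)^2 + p * (1-p) * ((t:ℝ)+1)) := by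
      rw [show S2v + (1/2) * (2 * (((2*(p*(N:ℝ)) - 1) * (C * p * t) + (p*(N:ℝ)) * C - 2 * S2v) / ((N:ℝ) - t)))
          = (S2v * (((N:ℝ) - t) - 2) + ((2*(p*(N:ℝ)) - 1) * (C * p * t) + (p*(N:ℝ)) * C)) / ((N:ℝ) - t) from by
        field_simp; ring]
      rw [div_le_iff₀ hD]
      have h2 : S2v * (((N:ℝ) - t) - 2) ≤ (C * (p^2 * t^2 + p * (1-p) * t)) * (((N:ℝ) - t) - 2) :=
        mul_le_mul_of_nonneg_right ihv (by linarith)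
      nlinarith [mul_nonneg (mul_nonneg (mul_nonneg hC hp) (by linarith : (0:ℝ) ≤ 1 - p)) ht0]
    calc S2v + (1/2) * (2 * (((2*(p*(N:ℝ)) - 1) * (C * p * t) + (p*(N:ℝ)) * C - 2 * S2v) / ((N:ℝ) - t)))
        ≤ C * (p^2 * ((t:ℝ)+1)^2 + p * (1-p) * ((t:ℝ)+1)) := key
      _ = C * (p^2 * ((t+1 : ℕ):ℝ)^2 + p * (1-p) * ((t+1 : ℕ):ℝ)) := by push_cast; ring


noncomputable def Et (N K n : ℕ) (p : ℝ) (f : (Fin n → Bool) → ℝ) (t : ℕ) : ℝ :=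
  ∑ a : Fin n → Bool, cc N K t (cnt t a) * tl p t a * f a

lemma lip2 {n : ℕ} (f : (Fin n → Bool) → ℝ)
    (hfL : ∀ a b : Fin n → Bool, |f a - f b| ≤ ∑ j, |spin (a j) - spin (b j)|)
    (a : Fin n → Bool) (j : Fin n) :
    |f (Function.update a j true) - f (Function.update a j false)| ≤ 2 := by
  refine le_trans (hfL _ _) ?_
  have key : ∀ i : Fin n, |spin (Function.update a j true i) - spin (Function.update a j false i)|
      = if i = j then 2 else 0 := by
    intro i
    by_cases hij : i = j
    · subst hij
      simp only [Function.update_self, if_pos rfl, spin]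
      norm_num
    · simp [Function.update_of_ne hij, hij]
  rw [Finset.sum_congr rfl fun i _ => key i, Finset.sum_ite_eq' Finset.univ j (fun _ => (2:ℝ))]
  simp

lemma W_bound {N K n : ℕ} {p : ℝ} (hp : 0 ≤ p) (hp1 : p ≤ 1) (hKp : (K:ℝ) = p * N)
    (hnN : n < N) (t : ℕ) (htn : t ≤ n) :
    ∑ a : Fin n → Bool, tl p t a * (cc N K t (cnt t a) * |(cnt t a : ℝ) - p * t|)
      ≤ (N.choose K : ℝ) * Real.sqrt (p * (1-p) * t) := by
  set C := (N.choose K : ℝ) with hCdef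
  have hC : 0 ≤ C := Nat.cast_nonneg _
  set w : (Fin n → Bool) → ℝ := fun a => cc N K t (cnt t a) * tl p t a with hwdef
  have hw : ∀ a, 0 ≤ w a := fun a => mul_nonneg (cc_nonneg _ _ _ _) (tl_nonneg hp hp1 a)
  have hsum : ∑ a : Fin n → Bool, w a = C := M0 p hnN t htn
  have hq : (0:ℝ) ≤ 1 - p := by linarith
  have hpq : (0:ℝ) ≤ p * (1-p) * t := by positivity
  have hsum2 : ∑ a : Fin n → Bool, w a * ((cnt t a : ℝ) - p*t)^2 ≤ C * (p * (1-p) * t) := by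
    have hpt : ∀ a : Fin n → Bool, w a * ((cnt t a : ℝ) - p*t)^2
        = cc N K t (cnt t a) * tl p t a * ((cnt t a : ℝ))^2
          - (2*(p*t)) * (cc N K t (cnt t a) * tl p t a * (cnt t a : ℝ))
          + (p*t)^2 * (cc N K t (cnt t a) * tl p t a) := by
      intro a; simp only [hwdef]; ring
    rw [Finset.sum_congr rfl fun a _ => hpt a, Finset.sum_add_distrib, Finset.sum_sub_distrib,
      ← Finset.mul_sum, ← Finset.mul_sum, M0 p hnN t htn, M1 p hnN hKp t htn]
    have h2 := M2 p hnN hKp hp hp1 t htn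
    nlinarith [h2]
  have hcs := Finset.sum_mul_sq_le_sq_mul_sq Finset.univ
    (fun a : Fin n → Bool => Real.sqrt (w a))
    (fun a : Fin n → Bool => Real.sqrt (w a) * |(cnt t a : ℝ) - p*t|)
  have h1 : ∀ a : Fin n → Bool,
      Real.sqrt (w a) * (Real.sqrt (w a) * |(cnt t a : ℝ) - p*t|) = w a * |(cnt t a : ℝ) - p*t| := by
    intro a; rw [← mul_assoc, Real.mul_self_sqrt (hw a)]
  have h2 : ∀ a : Fin n → Bool, (Real.sqrt (w a))^2 = w a := fun a => Real.sq_sqrt (hw a)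
  have h3 : ∀ a : Fin n → Bool,
      (Real.sqrt (w a) * |(cnt t a : ℝ) - p*t|)^2 = w a * ((cnt t a : ℝ) - p*t)^2 := by
    intro a; rw [mul_pow, Real.sq_sqrt (hw a), sq_abs]
  rw [Finset.sum_congr rfl fun a _ => h1 a, Finset.sum_congr rfl fun a _ => h2 a,
    Finset.sum_congr rfl fun a _ => h3 a, hsum] at hcs
  -- hcs : (∑ w |d|)^2 ≤ C * ∑ w d^2
  have hW0 : 0 ≤ ∑ a : Fin n → Bool, w a * |(cnt t a : ℝ) - p*t| :=
    Finset.sum_nonneg fun a _ => mul_nonneg (hw a) (abs_nonneg _)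
  have hgoal : ∑ a : Fin n → Bool, tl p t a * (cc N K t (cnt t a) * |(cnt t a : ℝ) - p * t|)
      = ∑ a : Fin n → Bool, w a * |(cnt t a : ℝ) - p*t| := by
    refine Finset.sum_congr rfl fun a _ => ?_
    simp only [hwdef]; ring
  rw [hgoal, show C * Real.sqrt (p * (1-p) * t) = Real.sqrt (C^2 * (p * (1-p) * t)) from by
    rw [Real.sqrt_mul (sq_nonneg C), Real.sqrt_sq hC]]
  rw [show (∑ a : Fin n → Bool, w a * |(cnt t a : ℝ) - p*t|)
      = Real.sqrt ((∑ a : Fin n → Bool, w a * |(cnt t a : ℝ) - p*t|)^2) from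
    (Real.sqrt_sq hW0).symm]
  apply Real.sqrt_le_sqrt
  calc (∑ a : Fin n → Bool, w a * |(cnt t a : ℝ) - p*t|)^2
      ≤ C * ∑ a : Fin n → Bool, w a * ((cnt t a : ℝ) - p*t)^2 := hcs
    _ ≤ C * (C * (p * (1-p) * t)) := mul_le_mul_of_nonneg_left hsum2 hC
    _ = C^2 * (p * (1-p) * t) := by ring

lemma step_bound {N K n : ℕ} {p : ℝ} (hp : 0 ≤ p) (hp1 : p ≤ 1) (hKp : (K:ℝ) = p * N)
    (hnN : n < N) (f : (Fin n → Bool) → ℝ)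
    (hfd : ∀ (a : Fin n → Bool) (j : Fin n),
      |f (Function.update a j true) - f (Function.update a j false)| ≤ 2)
    (t : ℕ) (ht : t < n) :
    |Et N K n p f (t+1) - Et N K n p f t|
      ≤ 2 * (N.choose K : ℝ) * Real.sqrt (p * (1-p) * t) / ((N:ℝ) - t) := by
  have htN : t < N := by omega
  have hD : (0:ℝ) < (N:ℝ) - t := by
    have : (t:ℝ) < N := by exact_mod_cast htN
    linarith
  have hDabs : ∀ k : ℕ, |cc N K (t+1) (k+1) - p * cc N K t k|
      = cc N K t k * |(k:ℝ) - p * t| / ((N:ℝ) - t) := by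
    intro k
    have hid : cc N K (t+1) (k+1) - p * cc N K t k
        = cc N K t k * (p * t - (k:ℝ)) / ((N:ℝ) - t) := by
      rw [cc_ratio' t k htN, hKp]
      field_simp
      ring
    rw [hid, abs_div, abs_mul, abs_of_nonneg (cc_nonneg N K t k), abs_of_pos hD, abs_sub_comm]
  unfold Et
  rw [stepF p f t ht htN]
  calc |(1/2) * ∑ a : Fin n → Bool, tl p (t+1) a
        * (cc N K (t+1) (cnt t a + 1) - p * cc N K t (cnt t a))
        * (f (Function.update a ⟨t, ht⟩ true) - f (Function.update a ⟨t, ht⟩ false))|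
      = (1/2) * |∑ a : Fin n → Bool, tl p (t+1) a
        * (cc N K (t+1) (cnt t a + 1) - p * cc N K t (cnt t a))
        * (f (Function.update a ⟨t, ht⟩ true) - f (Function.update a ⟨t, ht⟩ false))| := by
        rw [abs_mul]; norm_num
    _ ≤ (1/2) * ∑ a : Fin n → Bool, |tl p (t+1) a
        * (cc N K (t+1) (cnt t a + 1) - p * cc N K t (cnt t a))
        * (f (Function.update a ⟨t, ht⟩ true) - f (Function.update a ⟨t, ht⟩ false))| := by
        gcongr
        exact Finset.abs_sum_le_sum_abs _ _
    _ ≤ (1/2) * ∑ a : Fin n → Bool, tl p (t+1) a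
        * (cc N K t (cnt t a) * |(cnt t a : ℝ) - p * t| / ((N:ℝ) - t)) * 2 := by
        have hmono : ∀ a : Fin n → Bool, |tl p (t+1) a
            * (cc N K (t+1) (cnt t a + 1) - p * cc N K t (cnt t a))
            * (f (Function.update a ⟨t, ht⟩ true) - f (Function.update a ⟨t, ht⟩ false))|
            ≤ tl p (t+1) a * (cc N K t (cnt t a) * |(cnt t a : ℝ) - p * t| / ((N:ℝ) - t)) * 2 := by
          intro a
          rw [abs_mul, abs_mul, abs_of_nonneg (tl_nonneg hp hp1 a), hDabs (cnt t a)]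
          exact mul_le_mul_of_nonneg_left (hfd a ⟨t, ht⟩)
            (mul_nonneg (tl_nonneg hp hp1 a)
              (div_nonneg (mul_nonneg (cc_nonneg _ _ _ _) (abs_nonneg _)) hD.le))
        exact mul_le_mul_of_nonneg_left (Finset.sum_le_sum fun a _ => hmono a) (by norm_num)
    _ = (1/((N:ℝ) - t)) * ∑ a : Fin n → Bool, tl p (t+1) a
          * (cc N K t (cnt t a) * |(cnt t a : ℝ) - p * t|) := by
        rw [Finset.mul_sum, Finset.mul_sum]
        refine Finset.sum_congr rfl fun a _ => ?_
        field_simp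
    _ = (1/((N:ℝ) - t)) * (2 * ∑ a : Fin n → Bool, tl p t a
          * (cc N K t (cnt t a) * |(cnt t a : ℝ) - p * t|)) := by
        rw [halfX p (fun k => cc N K t k * |(k:ℝ) - p * t|) t ht]
    _ ≤ (1/((N:ℝ) - t)) * (2 * ((N.choose K : ℝ) * Real.sqrt (p * (1-p) * t))) := by
        have h := W_bound (N := N) (K := K) hp hp1 hKp hnN t ht.le
        have h2 : (0:ℝ) ≤ 1/((N:ℝ)-t) := by positivity
        exact mul_le_mul_of_nonneg_left (mul_le_mul_of_nonneg_left h (by norm_num)) h2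
    _ = 2 * (N.choose K : ℝ) * Real.sqrt (p * (1-p) * t) / ((N:ℝ) - t) := by
        field_simp

lemma tele_bound {N K n : ℕ} {p : ℝ} (hp : 0 ≤ p) (hp1 : p ≤ 1) (hKp : (K:ℝ) = p * N)
    (hnN : n < N) (f : (Fin n → Bool) → ℝ)
    (hfd : ∀ (a : Fin n → Bool) (j : Fin n),
      |f (Function.update a j true) - f (Function.update a j false)| ≤ 2) :
    |Et N K n p f n - Et N K n p f 0|
      ≤ (n:ℝ) * (2 * (N.choose K : ℝ) * (Real.sqrt (p * (1-p)) * Real.sqrt N) / ((N:ℝ) - n)) := by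
  have hDn : (0:ℝ) < (N:ℝ) - n := by
    have : (n:ℝ) < N := by exact_mod_cast hnN
    linarith
  have htel : Et N K n p f n - Et N K n p f 0
      = ∑ t ∈ Finset.range n, (Et N K n p f (t+1) - Et N K n p f t) :=
    (Finset.sum_range_sub (Et N K n p f) n).symm
  rw [htel]
  calc |∑ t ∈ Finset.range n, (Et N K n p f (t+1) - Et N K n p f t)|
      ≤ ∑ t ∈ Finset.range n, |Et N K n p f (t+1) - Et N K n p f t| :=
        Finset.abs_sum_le_sum_abs _ _
    _ ≤ ∑ t ∈ Finset.range n, 2 * (N.choose K : ℝ) * (Real.sqrt (p * (1-p)) * Real.sqrt N) / ((N:ℝ) - n) := by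
        refine Finset.sum_le_sum fun t htr => ?_
        have ht : t < n := Finset.mem_range.mp htr
        refine le_trans (step_bound hp hp1 hKp hnN f hfd t ht) ?_
        have hpq0 : (0:ℝ) ≤ p * (1-p) := mul_nonneg hp (by linarith)
        have h1 : Real.sqrt (p * (1-p) * t) ≤ Real.sqrt (p * (1-p)) * Real.sqrt N := by
          rw [Real.sqrt_mul hpq0]
          have htle : Real.sqrt (t:ℝ) ≤ Real.sqrt (N:ℝ) := by
            apply Real.sqrt_le_sqrt
            have : t ≤ N := by omega
            exact_mod_cast this
          exact mul_le_mul_of_nonneg_left htle (Real.sqrt_nonneg _)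
        have hnum : 2 * (N.choose K : ℝ) * Real.sqrt (p * (1-p) * t)
            ≤ 2 * (N.choose K : ℝ) * (Real.sqrt (p * (1-p)) * Real.sqrt N) :=
          mul_le_mul_of_nonneg_left h1 (by positivity)
        have hden : (N:ℝ) - n ≤ (N:ℝ) - t := by
          have : (t:ℝ) ≤ n := by exact_mod_cast ht.le
          linarith
        exact div_le_div₀ (by positivity) hnum hDn hden
    _ = (n:ℝ) * (2 * (N.choose K : ℝ) * (Real.sqrt (p * (1-p)) * Real.sqrt N) / ((N:ℝ) - n)) := by
        rw [Finset.sum_const, Finset.card_range, nsmul_eq_mul]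

def cnt2 {N : ℕ} (φ : Fin N → Bool) : ℕ := ∑ x, if φ x then 1 else 0

def kful {n : ℕ} (a : Fin n → Bool) : ℕ := ∑ j, if a j then 1 else 0

lemma cnt_top {n : ℕ} (a : Fin n → Bool) : cnt n a = kful a := by
  unfold cnt kful
  refine Finset.sum_congr rfl fun j _ => ?_
  rw [if_congr (and_iff_right j.2) rfl rfl]

lemma mag_eq {N : ℕ} (φ : Fin N → Bool) : mag φ = 2 * (cnt2 φ : ℝ) - N := by
  unfold mag cnt2
  push_cast
  have key : ∀ x : Fin N, (if φ x then (1:ℝ) else -1) = 2 * (if φ x then (1:ℝ) else 0) - 1 := by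
    intro x
    by_cases hx : φ x <;> simp [hx] <;> norm_num
  rw [Finset.sum_congr rfl fun x _ => key x, Finset.sum_sub_distrib, ← Finset.mul_sum]
  simp

lemma card_boolfun (X : Type*) [Fintype X] [DecidableEq X] (r : ℕ) :
    (Finset.univ.filter fun g : X → Bool => (∑ x, if g x then 1 else 0) = r).card
      = (Fintype.card X).choose r := by
  classical
  rw [show (Fintype.card X).choose r = (Finset.powersetCard r (Finset.univ : Finset X)).card from by
    rw [Finset.card_powersetCard, Finset.card_univ]]
  refine Finset.card_bij' (fun g _ => Finset.univ.filter (fun x => g x))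
    (fun s _ => fun x => decide (x ∈ s)) ?hi ?hj ?li ?ri
  case hi =>
    intro g hg
    simp only [Finset.mem_filter, Finset.mem_univ, true_and] at hg
    rw [Finset.mem_powersetCard_univ, Finset.card_filter]
    exact hg
  case hj =>
    intro s hs
    rw [Finset.mem_powersetCard_univ] at hs
    simp only [Finset.mem_filter, Finset.mem_univ, true_and]
    rw [← hs, ← Finset.card_filter]
    congr 1
    ext x
    simp
  case li =>
    intro g hg
    funext x
    by_cases hx : g x <;> simp [hx]
  case ri =>
    intro s hs
    ext x
    simp

lemma mc_marg {N n : ℕ} (I : Finset (Fin N)) (h : I.card = n)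
    (K : ℕ) (g : (Fin n → Bool) → ℝ) :
    ∑ φ ∈ Finset.univ.filter (fun φ : Fin N → Bool => cnt2 φ = K), g (projB I h φ)
      = ∑ a : Fin n → Bool, cc N K n (kful a) * g a := by
  classical
  rw [Finset.sum_filter]
  set e := Equiv.piEquivPiSubtypeProd (fun x : Fin N => x ∈ I) (fun _ => Bool) with hedef
  rw [← Equiv.sum_comp e.symm (fun φ => if cnt2 φ = K then g (projB I h φ) else 0)]
  rw [Fintype.sum_prod_type]
  set iso := I.orderIsoOfFin h with hiso
  have hval : ∀ (x : ({x // x ∈ I} → Bool) × ({x // ¬ x ∈ I} → Bool)) (y : Fin N),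
      e.symm x y = if hy : y ∈ I then x.1 ⟨y, hy⟩ else x.2 ⟨y, hy⟩ := by
    intro x y
    rw [hedef, Equiv.piEquivPiSubtypeProd_symm_apply]
  have hcnt : ∀ x : ({x // x ∈ I} → Bool) × ({x // ¬ x ∈ I} → Bool),
      cnt2 (e.symm x) = (∑ i : {x // x ∈ I}, if x.1 i then 1 else 0)
        + (∑ i : {x // ¬ x ∈ I}, if x.2 i then 1 else 0) := by
    intro x
    unfold cnt2
    rw [← Fintype.sum_subtype_add_sum_subtype (fun y : Fin N => y ∈ I)
      (fun y => if e.symm x y then 1 else 0)]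
    congr 1
    · refine Finset.sum_congr (by ext y; simp) fun i _ => ?_
      rw [hval x i, dif_pos i.2]
    · refine Finset.sum_congr (by ext y; simp) fun i _ => ?_
      rw [hval x i, dif_neg i.2]
  have hproj : ∀ x : ({x // x ∈ I} → Bool) × ({x // ¬ x ∈ I} → Bool),
      projB I h (e.symm x) = fun j => x.1 (iso j) := by
    intro x
    funext j
    unfold projB
    rw [hval x (iso j), dif_pos (iso j).2]
  have hinner : ∀ gI : {x // x ∈ I} → Bool,
      (∑ gC : {x // ¬ x ∈ I} → Bool,
        if cnt2 (e.symm (gI, gC)) = K then g (projB I h (e.symm (gI, gC))) else 0)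
      = cc N K n (∑ i : {x // x ∈ I}, if gI i then 1 else 0) * g (fun j => gI (iso j)) := by
    intro gI
    set kI := ∑ i : {x // x ∈ I}, if gI i then 1 else 0 with hkI
    have h1 : ∀ gC : {x // ¬ x ∈ I} → Bool,
        (if cnt2 (e.symm (gI, gC)) = K then g (projB I h (e.symm (gI, gC))) else 0)
        = (if kI + (∑ i : {x // ¬ x ∈ I}, if gC i then 1 else 0) = K then (1:ℝ) else 0)
            * g (fun j => gI (iso j)) := by
      intro gC
      rw [hcnt (gI, gC), hproj (gI, gC)]
      by_cases hc : kI + (∑ i : {x // ¬ x ∈ I}, if gC i then 1 else 0) = K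
      · rw [if_pos hc, if_pos hc, one_mul]
      · rw [if_neg hc, if_neg hc, zero_mul]
    rw [Finset.sum_congr rfl fun gC _ => h1 gC, ← Finset.sum_mul]
    congr 1
    have hcard : Fintype.card {x // ¬ x ∈ I} = N - n := by
      rw [Fintype.card_subtype_compl]
      simp [h]
    by_cases hkK : kI ≤ K
    · have h2 : ∀ gC : {x // ¬ x ∈ I} → Bool,
          (if kI + (∑ i : {x // ¬ x ∈ I}, if gC i then 1 else 0) = K then (1:ℝ) else 0)
          = (if (∑ i : {x // ¬ x ∈ I}, if gC i then 1 else 0) = K - kI then (1:ℝ) else 0) := by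
        intro gC
        congr 1
        simp only [eq_iff_iff]
        omega
      rw [Finset.sum_congr rfl fun gC _ => h2 gC, ← Finset.sum_filter, Finset.sum_const,
        card_boolfun, hcard]
      unfold cc
      rw [if_pos hkK]
      simp
    · have h2 : ∀ gC : {x // ¬ x ∈ I} → Bool,
          (if kI + (∑ i : {x // ¬ x ∈ I}, if gC i then 1 else 0) = K then (1:ℝ) else 0) = 0 := by
        intro gC
        rw [if_neg (by omega)]
      rw [Finset.sum_congr rfl fun gC _ => h2 gC, Finset.sum_const_zero]
      unfold cc
      rw [if_neg hkK]
  rw [Finset.sum_congr rfl fun gI _ => hinner gI]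
  set q : (Fin n → Bool) ≃ ({x // x ∈ I} → Bool) :=
    (Equiv.arrowCongr iso.toEquiv (Equiv.refl Bool)).symm.symm with hq
  rw [← Equiv.sum_comp q (fun gI => cc N K n (∑ i : {x // x ∈ I}, if gI i then 1 else 0)
    * g (fun j => gI (iso j)))]
  refine Finset.sum_congr rfl fun a _ => ?_
  have hqa : ∀ i, q a i = a (iso.symm i) := fun i => rfl
  have h3 : (∑ i : {x // x ∈ I}, if q a i then 1 else 0) = kful a := by
    simp only [hqa]
    unfold kful
    rw [← Equiv.sum_comp iso.toEquiv.symm (fun j => if a j then 1 else 0)]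
    rfl
  have h4 : (fun j => q a (iso j)) = a := by
    funext j
    rw [hqa]
    congr 1
    exact iso.symm_apply_apply j
  rw [h3, h4]

lemma sum_prod_v (X : Type*) [Fintype X] [DecidableEq X] (v : Bool → ℝ) :
    ∑ g : X → Bool, (∏ x, v (g x)) = (v true + v false) ^ (Fintype.card X) := by
  have h2 := Finset.prod_univ_sum (fun _ : X => (Finset.univ : Finset Bool)) (fun _ b => v b)
  rw [Fintype.piFinset_univ] at h2
  rw [← h2, Finset.prod_congr rfl fun x _ => Fintype.sum_bool (fun b => v b), Finset.prod_const,
    Finset.card_univ]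

lemma can_marg {N n : ℕ} (I : Finset (Fin N)) (h : I.card = n) (hn : n ≤ N)
    (v : Bool → ℝ) (g : (Fin n → Bool) → ℝ) :
    ∑ φ : Fin N → Bool, (∏ x, v (φ x)) * g (projB I h φ)
      = ((v true + v false) ^ (N - n)) * ∑ a : Fin n → Bool, (∏ j, v (a j)) * g a := by
  classical
  set e := Equiv.piEquivPiSubtypeProd (fun x : Fin N => x ∈ I) (fun _ => Bool) with hedef
  rw [← Equiv.sum_comp e.symm (fun φ => (∏ x, v (φ x)) * g (projB I h φ))]
  rw [Fintype.sum_prod_type]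
  set iso := I.orderIsoOfFin h with hiso
  have hval : ∀ (x : ({x // x ∈ I} → Bool) × ({x // ¬ x ∈ I} → Bool)) (y : Fin N),
      e.symm x y = if hy : y ∈ I then x.1 ⟨y, hy⟩ else x.2 ⟨y, hy⟩ := by
    intro x y
    rw [hedef, Equiv.piEquivPiSubtypeProd_symm_apply]
  have hprod : ∀ x : ({x // x ∈ I} → Bool) × ({x // ¬ x ∈ I} → Bool),
      (∏ y : Fin N, v (e.symm x y))
        = (∏ i : {x // x ∈ I}, v (x.1 i)) * (∏ i : {x // ¬ x ∈ I}, v (x.2 i)) := by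
    intro x
    rw [← Fintype.prod_subtype_mul_prod_subtype (fun y : Fin N => y ∈ I) (fun y => v (e.symm x y))]
    congr 1
    · refine Finset.prod_congr (by ext y; simp) fun i _ => ?_
      rw [hval x i, dif_pos i.2]
    · refine Finset.prod_congr (by ext y; simp) fun i _ => ?_
      rw [hval x i, dif_neg i.2]
  have hproj : ∀ x : ({x // x ∈ I} → Bool) × ({x // ¬ x ∈ I} → Bool),
      projB I h (e.symm x) = fun j => x.1 (iso j) := by
    intro x
    funext j
    unfold projB
    rw [hval x (iso j), dif_pos (iso j).2]
  have hcard : Fintype.card {x // ¬ x ∈ I} = N - n := by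
    rw [Fintype.card_subtype_compl]
    simp [h]
  have hinner : ∀ gI : {x // x ∈ I} → Bool,
      (∑ gC : {x // ¬ x ∈ I} → Bool, (∏ y : Fin N, v (e.symm (gI, gC) y)) * g (projB I h (e.symm (gI, gC))))
      = ((v true + v false) ^ (N - n)) * ((∏ i : {x // x ∈ I}, v (gI i)) * g (fun j => gI (iso j))) := by
    intro gI
    have h1 : ∀ gC : {x // ¬ x ∈ I} → Bool,
        (∏ y : Fin N, v (e.symm (gI, gC) y)) * g (projB I h (e.symm (gI, gC)))
        = (∏ i : {x // ¬ x ∈ I}, v (gC i)) * ((∏ i : {x // x ∈ I}, v (gI i)) * g (fun j => gI (iso j))) := by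
      intro gC
      rw [hprod (gI, gC), hproj (gI, gC)]
      ring
    rw [Finset.sum_congr rfl fun gC _ => h1 gC, ← Finset.sum_mul, sum_prod_v _ v, hcard]
  rw [Finset.sum_congr rfl fun gI _ => hinner gI, ← Finset.mul_sum]
  congr 1
  set q : (Fin n → Bool) ≃ ({x // x ∈ I} → Bool) :=
    (Equiv.arrowCongr iso.toEquiv (Equiv.refl Bool)) with hq
  rw [← Equiv.sum_comp q (fun gI => (∏ i : {x // x ∈ I}, v (gI i)) * g (fun j => gI (iso j)))]
  refine Finset.sum_congr rfl fun a _ => ?_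
  have hqa : ∀ i, q a i = a (iso.symm i) := fun i => rfl
  have h3 : (∏ i : {x // x ∈ I}, v (q a i)) = ∏ j, v (a j) := by
    simp only [hqa]
    rw [← Equiv.prod_comp iso.toEquiv.symm (fun j => v (a j))]
    rfl
  have h4 : (fun j => q a (iso j)) = a := by
    funext j
    rw [hqa]
    congr 1
    exact iso.symm_apply_apply j
  rw [h3, h4]

noncomputable def vv (μ : ℝ) (b : Bool) : ℝ := Real.exp (-μ * (if b then 1 else -1))

lemma exp_mag {N : ℕ} (μ : ℝ) (φ : Fin N → Bool) :
    Real.exp (-μ * mag φ) = ∏ x, vv μ (φ x) := by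
  unfold mag vv
  rw [Finset.mul_sum, Real.exp_sum]

lemma Zcan_eq (N : ℕ) (μ : ℝ) : Zcan N μ = (vv μ true + vv μ false) ^ N := by
  unfold Zcan
  rw [Finset.sum_congr rfl fun φ _ => exp_mag μ φ, sum_prod_v (Fin N) (vv μ), Fintype.card_fin]

lemma canExp_eq {N n : ℕ} (I : Finset (Fin N)) (h : I.card = n) (hn : n ≤ N) (μ : ℝ)
    (f : (Fin n → Bool) → ℝ) :
    canExp N μ (fun φ => f (projB I h φ))
      = ∑ a : Fin n → Bool,
          (∏ j, wt (vv μ true / (vv μ true + vv μ false)) (a j)) * f a := by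
  have hvpos : ∀ b, 0 < vv μ b := fun b => Real.exp_pos _
  have hs : (0:ℝ) < vv μ true + vv μ false := add_pos (hvpos true) (hvpos false)
  have hs' : vv μ true + vv μ false ≠ 0 := ne_of_gt hs
  have hwt : ∀ b, wt (vv μ true / (vv μ true + vv μ false)) b
      = vv μ b / (vv μ true + vv μ false) := by
    intro b
    cases b
    · rw [wt_false]
      field_simp
      ring
    · rw [wt_true]
  unfold canExp
  rw [Finset.sum_congr rfl fun φ _ => by rw [exp_mag μ φ]]
  rw [can_marg I h hn (vv μ) f, Zcan_eq]
  have hsplit : ∑ a : Fin n → Bool,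
      (∏ j, wt (vv μ true / (vv μ true + vv μ false)) (a j)) * f a
      = (∑ a : Fin n → Bool, (∏ j, vv μ (a j)) * f a) / (vv μ true + vv μ false) ^ n := by
    rw [Finset.sum_div]
    refine Finset.sum_congr rfl fun a _ => ?_
    rw [Finset.prod_congr rfl fun j _ => hwt (a j), Finset.prod_div_distrib,
      Finset.prod_const, Finset.card_univ, Fintype.card_fin]
    ring
  rw [hsplit]
  rw [show (vv μ true + vv μ false) ^ N
      = (vv μ true + vv μ false) ^ (N - n) * (vv μ true + vv μ false) ^ n from by
    rw [← pow_add]; congr 1; omega]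
  rw [mul_div_mul_left _ _ (pow_ne_zero _ hs')]

lemma p_art (m : ℝ) (h1 : -1 < m) (h2 : m < 1) :
    vv (artanh (-m)) true / (vv (artanh (-m)) true + vv (artanh (-m)) false) = (1 + m)/2 := by
  have h1m : (0:ℝ) < 1 - m := by linarith
  have h1p : (0:ℝ) < 1 + m := by linarith
  unfold vv artanh
  rw [show (if (true:Bool) = true then (1:ℝ) else -1) = 1 from rfl,
    show (if (false:Bool) = true then (1:ℝ) else -1) = -1 from rfl]
  set μ := Real.log ((1 + -m) / (1 - -m)) / 2 with hμdef
  have hF : Real.exp (-μ * (-1:ℝ)) = (Real.exp (-μ * (1:ℝ)))⁻¹ := by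
    rw [← Real.exp_neg]
    congr 1
    ring
  rw [hF]
  set E := Real.exp (-μ * (1:ℝ)) with hEdef
  have hEpos : 0 < E := Real.exp_pos _
  have hE2 : E^2 = (1+m)/(1-m) := by
    rw [hEdef, pow_two, ← Real.exp_add]
    rw [show -μ * (1:ℝ) + -μ * (1:ℝ) = -(2*μ) from by ring]
    rw [hμdef]
    rw [show -(2 * (Real.log ((1 + -m) / (1 - -m)) / 2)) = -Real.log ((1 + -m) / (1 - -m)) from by ring]
    rw [show (1:ℝ) + -m = 1 - m from by ring, show (1:ℝ) - -m = 1 + m from by ring]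
    rw [Real.exp_neg, Real.exp_log (by positivity), inv_div]
  have hden : (0:ℝ) < E + E⁻¹ := by positivity
  rw [div_eq_div_iff (ne_of_gt hden) (by norm_num : (2:ℝ) ≠ 0)]
  have hclear : E * 2 * ((1 - m) * E) = (1 + m) * (E + E⁻¹) * ((1 - m) * E) := by
    have hEinv : E⁻¹ * E = 1 := inv_mul_cancel₀ (ne_of_gt hEpos)
    have expand : (1 + m) * (E + E⁻¹) * ((1 - m) * E)
        = (1 + m) * (1-m) * (E^2) + (1+m) * (1-m) * (E⁻¹ * E) := by ring
    have hE2' : E^2 * (1-m) = 1 + m := by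
      rw [hE2]
      field_simp
    rw [expand, hEinv]
    linear_combination (1-m) * hE2'
  have hne : (1 - m) * E ≠ 0 := by positivity
  exact mul_right_cancel₀ hne hclear

lemma magSet_eq {N : ℕ} (hN : 0 < N) (m : ℝ) (K : ℕ) (hmK : m * N = 2*(K:ℝ) - N) :
    magSet N m = Finset.univ.filter (fun φ => cnt2 φ = K) := by
  have hN' : ((N:ℝ)) ≠ 0 := by positivity
  unfold magSet
  ext φ
  simp only [Finset.mem_filter, Finset.mem_univ, true_and]
  rw [mag_eq, div_eq_iff hN']
  constructor
  · intro hφ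
    have : (cnt2 φ : ℝ) = K := by linarith
    exact_mod_cast this
  · intro hφ
    rw [hφ]
    linarith

end Stmt8

theorem stmt8 (m : ℝ) (hm : m ∈ Set.Ioo (-1 : ℝ) 1)
    (n : ℕ) (hn : 0 < n) (f : (Fin n → Bool) → ℝ)
    -- `f` is bounded
    (hfB : ∃ C, ∀ a, |f a| ≤ C)
    -- `f` is 1-Lipschitz with respect to the ℓ¹-norm on `ℝ^n` (via the spin embedding)
    (hfL : ∀ a b : Fin n → Bool, |f a - f b| ≤ ∑ j, |spin (a j) - spin (b j)|) :
    ∀ N : ℕ, n < N → ∀ I : Finset (Fin N), ∀ h : I.card = n,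
      (∃ φ : Fin N → Bool, mag φ / N = m) →
        |mcExp N m (fun φ => f (projB I h φ)) -
            canExp N (artanh (-m)) (fun φ => f (projB I h φ))| ≤
          ((n : ℝ) / (1 - (n : ℝ) / N)) * Real.sqrt (1 - m ^ 2) / Real.sqrt N := by
  obtain ⟨hm1, hm2⟩ := hm
  intro N hnN I h hex
  obtain ⟨φ₀, hφ₀⟩ := hex
  classical
  set K := Stmt8.cnt2 φ₀ with hKdef
  have hN : 0 < N := by omega
  have hN' : ((N:ℝ)) ≠ 0 := by positivity
  have hNpos : (0:ℝ) < N := by positivity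
  have hmagN : m * N = 2*(K:ℝ) - N := by
    rw [Stmt8.mag_eq, div_eq_iff hN'] at hφ₀
    linarith
  set p := (1 + m)/2 with hpdef
  have hp0 : 0 ≤ p := by rw [hpdef]; linarith
  have hp1 : p ≤ 1 := by rw [hpdef]; linarith
  have hKp : (K:ℝ) = p * N := by rw [hpdef]; nlinarith [hmagN]
  have hKN : K ≤ N := by
    have hK1 : (K:ℝ) ≤ N := by nlinarith [hKp, hNpos]
    exact_mod_cast hK1
  set C := ((N.choose K : ℕ) : ℝ) with hCdef
  have hC0 : (0:ℝ) < C := by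
    rw [hCdef]
    exact_mod_cast Nat.choose_pos hKN
  -- microcanonical side
  have hmagset := Stmt8.magSet_eq hN m K hmagN
  have hmcnum : ∑ φ ∈ magSet N m, f (projB I h φ)
      = ∑ a : Fin n → Bool, Stmt8.cc N K n (Stmt8.kful a) * f a := by
    rw [hmagset]
    exact Stmt8.mc_marg I h K f
  have hmccard : ((magSet N m).card : ℝ) = C := by
    have h1 : ∑ φ ∈ magSet N m, (1:ℝ)
        = ∑ a : Fin n → Bool, Stmt8.cc N K n (Stmt8.kful a) * 1 := by
      rw [hmagset]
      exact Stmt8.mc_marg I h K (fun _ => 1)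
    rw [Finset.sum_const, nsmul_eq_mul, mul_one] at h1
    rw [h1, hCdef]
    have h2 := Stmt8.M0 (N := N) (K := K) (n := n) p hnN n le_rfl
    rw [← h2]
    refine Finset.sum_congr rfl fun a _ => ?_
    rw [Stmt8.tl_top p le_rfl, Stmt8.cnt_top, mul_one]
  have hmc : mcExp N m (fun φ => f (projB I h φ)) = Stmt8.Et N K n p f n / C := by
    unfold mcExp
    rw [hmcnum, hmccard]
    congr 1
    unfold Stmt8.Et
    refine Finset.sum_congr rfl fun a _ => ?_
    rw [Stmt8.tl_top p le_rfl, Stmt8.cnt_top, mul_one]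
  -- canonical side
  have hpval : Stmt8.vv (artanh (-m)) true
      / (Stmt8.vv (artanh (-m)) true + Stmt8.vv (artanh (-m)) false) = p := by
    rw [hpdef]
    exact Stmt8.p_art m hm1 hm2
  have hcan : canExp N (artanh (-m)) (fun φ => f (projB I h φ)) = Stmt8.Et N K n p f 0 / C := by
    rw [Stmt8.canExp_eq I h (le_of_lt hnN) (artanh (-m)) f, hpval]
    unfold Stmt8.Et
    have hE0 : (∑ a : Fin n → Bool, Stmt8.cc N K 0 (Stmt8.cnt 0 a) * Stmt8.tl p 0 a * f a)
        = C * ∑ a : Fin n → Bool, (∏ j, Stmt8.wt p (a j)) * f a := by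
      rw [Finset.mul_sum]
      refine Finset.sum_congr rfl fun a _ => ?_
      rw [Stmt8.cnt_zero]
      have hcc0 : Stmt8.cc N K 0 0 = C := by
        unfold Stmt8.cc
        rw [if_pos (Nat.zero_le K)]
        simp [hCdef]
      have htl0 : Stmt8.tl p 0 a = ∏ j, Stmt8.wt p (a j) := by
        unfold Stmt8.tl
        rw [Finset.filter_true_of_mem (fun j _ => Nat.zero_le _)]
      rw [hcc0, htl0]
      ring
    rw [hE0, mul_comm, mul_div_assoc, div_self (ne_of_gt hC0), mul_one]
  -- combine
  rw [hmc, hcan, div_sub_div_same, abs_div, abs_of_pos hC0]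
  have hmain := Stmt8.tele_bound (N := N) (K := K) hp0 hp1 hKp hnN f
    (fun a j => Stmt8.lip2 f hfL a j)
  have hNn : (0:ℝ) < (N:ℝ) - n := by
    have : (n:ℝ) < N := by exact_mod_cast hnN
    linarith
  have hfinal : |Stmt8.Et N K n p f n - Stmt8.Et N K n p f 0| / C
      ≤ (n:ℝ) * (2 * (Real.sqrt (p*(1-p)) * Real.sqrt N) / ((N:ℝ) - n)) := by
    rw [div_le_iff₀ hC0]
    refine le_trans hmain (le_of_eq ?_)
    rw [hCdef]
    ring
  refine le_trans hfinal (le_of_eq ?_)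
  have hsq : Real.sqrt (1 - m^2) = 2 * Real.sqrt (p*(1-p)) := by
    rw [show (1:ℝ) - m^2 = 2^2 * (p*(1-p)) from by rw [hpdef]; ring]
    rw [Real.sqrt_mul (by norm_num : (0:ℝ) ≤ 2^2), Real.sqrt_sq (by norm_num : (0:ℝ) ≤ 2)]
  rw [hsq]
  have hsN : (0:ℝ) < Real.sqrt N := Real.sqrt_pos.mpr hNpos
  have h1mn : 1 - (n:ℝ)/N = ((N:ℝ) - n)/N := by field_simp
  rw [h1mn]
  rw [show ((n:ℝ) / (((N:ℝ) - n)/N)) = (n:ℝ) * N / ((N:ℝ) - n) from by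
    rw [div_div_eq_mul_div]]
  have hNss : Real.sqrt N * Real.sqrt N = N := Real.mul_self_sqrt (le_of_lt hNpos)
  field_simp
  linear_combination (Real.sqrt (p*(1-p))) * hNss
end

section
/- Let N ∈ ℕ with N ≥ 2, ρ > 0, and m, m' ∈ (−√ρ, √ρ). Then the specific 2-norm fluctuation distance between the auxiliary microcanonical ensembles satisfies w₂(μ_MC^{m,ρ;N}, μ_MC^{m',ρ;N}; N) ≤ (1 + 2/√(1 − m²/ρ)) · |m − m'|. -/
open MeasureTheory ProbabilityTheory Matrix

/-- The specific `p`-norm fluctuation distance `w_p(μ₁, μ₂; N)`: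
the infimum over all couplings `γ` of `μ₁` and `μ₂` of
`∫ (1/N) ∑ᵢ |xᵢ - yᵢ|^p dγ`, raised to the power `1/p`. -/
noncomputable def fluctDist (p : ℝ) (N : ℕ) (μ₁ μ₂ : Measure (Fin N → ℝ)) : ℝ :=
  sInf {c : ℝ | ∃ γ : Measure ((Fin N → ℝ) × (Fin N → ℝ)), IsProbabilityMeasure γ ∧
      γ.map Prod.fst = μ₁ ∧ γ.map Prod.snd = μ₂ ∧
      c = ∫ xy, (N : ℝ)⁻¹ * ∑ i, |xy.1 i - xy.2 i| ^ p ∂γ} ^ (1 / p)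

/-- The standard Gaussian measure on `ℝ^N`. -/
noncomputable def stdGaussian (N : ℕ) : Measure (Fin N → ℝ) :=
  Measure.pi fun _ => gaussianReal 0 1

/-- `U` is an orthogonal matrix such that the first coordinate of `U x` is
`N^{-1/2} ∑ᵢ xᵢ`. -/
def GoodRotation {N : ℕ} (hN : 0 < N) (U : Matrix (Fin N) (Fin N) ℝ) : Prop :=
  Uᵀ * U = 1 ∧ ∀ x : Fin N → ℝ, U.mulVec x ⟨0, hN⟩ = (∑ i, x i) / Real.sqrt N

/-- The auxiliary microcanonical ensemble `μ_MC^{m,ρ;N}` with magnetization density `m` and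
particle density `ρ`: the pushforward under `U⁻¹` of the product of the Dirac mass at `m √N`
in the first coordinate with the uniform probability measure on the sphere of radius
`√(N(ρ − m²))` in the remaining `N − 1` coordinates.  The uniform sphere measure is realized
as the pushforward of the standard Gaussian on the remaining coordinates under radial
normalization. -/
noncomputable def mcSpherical {N : ℕ} (hN : 0 < N) (U : Matrix (Fin N) (Fin N) ℝ)
    (m ρ : ℝ) : Measure (Fin N → ℝ) :=
  (stdGaussian N).map fun x =>
    U⁻¹.mulVec fun i =>
      if i = ⟨0, hN⟩ then m * Real.sqrt N
      else Real.sqrt (N * (ρ - m ^ 2)) * x i /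
        Real.sqrt (∑ j ∈ Finset.univ.filter (fun j => j ≠ (⟨0, hN⟩ : Fin N)), x j ^ 2)

/-- The map realizing the microcanonical ensemble as a pushforward of the Gaussian. -/
noncomputable def mcMap {N : ℕ} (hN : 0 < N) (U : Matrix (Fin N) (Fin N) ℝ)
    (m ρ : ℝ) (x : Fin N → ℝ) : Fin N → ℝ :=
  U⁻¹.mulVec fun i =>
    if i = ⟨0, hN⟩ then m * Real.sqrt N
    else Real.sqrt (N * (ρ - m ^ 2)) * x i /
      Real.sqrt (∑ j ∈ Finset.univ.filter (fun j => j ≠ (⟨0, hN⟩ : Fin N)), x j ^ 2)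

lemma mcSpherical_eq_map {N : ℕ} (hN : 0 < N) (U : Matrix (Fin N) (Fin N) ℝ) (m ρ : ℝ) :
    mcSpherical hN U m ρ = (stdGaussian N).map (mcMap hN U m ρ) := rfl

/-- Orthogonal matrices preserve the sum of squares. -/
lemma orth_sum_sq {N : ℕ} {U : Matrix (Fin N) (Fin N) ℝ} (hU : Uᵀ * U = 1)
    (w : Fin N → ℝ) : ∑ i, (U⁻¹.mulVec w i) ^ 2 = ∑ i, w i ^ 2 := by
  have hinv : U⁻¹ = Uᵀ := Matrix.inv_eq_left_inv hU
  have h2 : U * Uᵀ = 1 := mul_eq_one_comm.mpr hU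
  have key : U.mulVec (Uᵀ.mulVec w) = w := by
    rw [Matrix.mulVec_mulVec, h2, Matrix.one_mulVec]
  calc ∑ i, (U⁻¹.mulVec w i) ^ 2 = (Uᵀ.mulVec w) ⬝ᵥ (Uᵀ.mulVec w) := by
        rw [hinv]; simp [dotProduct, pow_two]
    _ = ∑ i, w i ^ 2 := by
        rw [Matrix.dotProduct_mulVec, Matrix.vecMul_transpose, key]
        simp [dotProduct, pow_two]

lemma mcMap_measurable {N : ℕ} (hN : 0 < N) (U : Matrix (Fin N) (Fin N) ℝ) (m ρ : ℝ) :
    Measurable (mcMap hN U m ρ) := by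
  have hS : Measurable (fun x : Fin N → ℝ =>
      Real.sqrt (∑ j ∈ Finset.univ.filter (fun j => j ≠ (⟨0, hN⟩ : Fin N)), x j ^ 2)) := by
    exact Real.continuous_sqrt.measurable.comp
      (Finset.measurable_sum _ fun j _ => (measurable_pi_apply j).pow_const 2)
  have hg : Measurable (fun x : Fin N → ℝ => (fun i : Fin N =>
      if i = ⟨0, hN⟩ then m * Real.sqrt N
      else Real.sqrt (N * (ρ - m ^ 2)) * x i /
        Real.sqrt (∑ j ∈ Finset.univ.filter (fun j => j ≠ (⟨0, hN⟩ : Fin N)), x j ^ 2))) := by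
    refine measurable_pi_lambda _ fun i => ?_
    by_cases h : i = ⟨0, hN⟩
    · simp only [h, if_pos]; exact measurable_const
    · simp only [h, if_neg, if_false]
      exact (measurable_const.mul (measurable_pi_apply i)).div hS
  have hlin : Measurable (Matrix.mulVecLin U⁻¹) :=
    (Matrix.mulVecLin U⁻¹).continuous_of_finiteDimensional.measurable
  have : mcMap hN U m ρ = (Matrix.mulVecLin U⁻¹) ∘ (fun x : Fin N → ℝ => (fun i : Fin N =>
      if i = ⟨0, hN⟩ then m * Real.sqrt N
      else Real.sqrt (N * (ρ - m ^ 2)) * x i /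
        Real.sqrt (∑ j ∈ Finset.univ.filter (fun j => j ≠ (⟨0, hN⟩ : Fin N)), x j ^ 2))) := by
    funext x
    simp [mcMap, Matrix.mulVecLin_apply]
  rw [this]
  exact hlin.comp hg

lemma abs_rpow_two (t : ℝ) : |t| ^ (2 : ℝ) = t ^ 2 := by
  rw [show (2 : ℝ) = ((2 : ℕ) : ℝ) by norm_num, Real.rpow_natCast, sq_abs]

/-- The pointwise cost computation. -/
lemma pointwise_cost {N : ℕ} (hN : 0 < N) (hN2 : 2 ≤ N) {U : Matrix (Fin N) (Fin N) ℝ}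
    (hUo : Uᵀ * U = 1) (m m' ρ : ℝ) (hm : m ^ 2 ≤ ρ) (hm' : m' ^ 2 ≤ ρ)
    (x : Fin N → ℝ) (hx : x ⟨1, hN2⟩ ≠ 0) :
    (N : ℝ)⁻¹ * ∑ i, |mcMap hN U m ρ x i - mcMap hN U m' ρ x i| ^ (2 : ℝ) =
      (m - m') ^ 2 + (Real.sqrt (ρ - m ^ 2) - Real.sqrt (ρ - m' ^ 2)) ^ 2 := by
  set j0 : Fin N := ⟨0, hN⟩ with hj0
  set j1 : Fin N := ⟨1, hN2⟩ with hj1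
  have hj10 : j1 ≠ j0 := by simp [hj0, hj1, Fin.ext_iff]
  set S : ℝ := ∑ j ∈ Finset.univ.filter (fun j => j ≠ j0), x j ^ 2 with hSdef
  have hSpos : 0 < S := by
    have hmem : j1 ∈ Finset.univ.filter (fun j => j ≠ j0) := by
      simp [hj10]
    have h1 : x j1 ^ 2 ≤ S :=
      Finset.single_le_sum (f := fun j => x j ^ 2) (fun j _ => sq_nonneg _) hmem
    nlinarith [sq_nonneg (x j1), hx, sq_abs (x j1), abs_pos.mpr hx,
      mul_pos (abs_pos.mpr hx) (abs_pos.mpr hx)]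
  set s : ℝ := Real.sqrt S with hsdef
  have hs2 : s ^ 2 = S := Real.sq_sqrt hSpos.le
  have hsne : s ≠ 0 := by
    rw [hsdef]
    exact ne_of_gt (Real.sqrt_pos.mpr hSpos)
  set a : ℝ := Real.sqrt (N * (ρ - m ^ 2)) with hadef
  set a' : ℝ := Real.sqrt (N * (ρ - m' ^ 2)) with ha'def
  set g : Fin N → ℝ := fun i => if i = j0 then m * Real.sqrt N else a * x i / s with hgdef
  set g' : Fin N → ℝ := fun i => if i = j0 then m' * Real.sqrt N else a' * x i / s
    with hg'def
  have hmc : ∀ i, mcMap hN U m ρ x i - mcMap hN U m' ρ x i = U⁻¹.mulVec (g - g') i := by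
    intro i
    rw [Matrix.mulVec_sub]
    rfl
  have hsum : ∑ i, |mcMap hN U m ρ x i - mcMap hN U m' ρ x i| ^ (2 : ℝ)
      = ∑ i, (g i - g' i) ^ 2 := by
    calc ∑ i, |mcMap hN U m ρ x i - mcMap hN U m' ρ x i| ^ (2 : ℝ)
        = ∑ i, (U⁻¹.mulVec (g - g') i) ^ 2 := by
          refine Finset.sum_congr rfl fun i _ => ?_
          rw [abs_rpow_two, hmc i]
      _ = ∑ i, (g i - g' i) ^ 2 := orth_sum_sq hUo _
      _ = ∑ i, (g i - g' i) ^ 2 := by simp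
  rw [hsum]
  -- now compute ∑ i, (g i - g' i)^2
  have hsplit : ∑ i, (g i - g' i) ^ 2 =
      (g j0 - g' j0) ^ 2 + ∑ i ∈ Finset.univ.erase j0, (g i - g' i) ^ 2 := by
    rw [← Finset.add_sum_erase _ _ (Finset.mem_univ j0)]
  have hNpos : (0 : ℝ) < N := by exact_mod_cast hN
  have hsqN : Real.sqrt N ^ 2 = (N : ℝ) := Real.sq_sqrt hNpos.le
  have h0 : (g j0 - g' j0) ^ 2 = (m - m') ^ 2 * N := by
    simp only [hgdef, hg'def, if_pos rfl]
    nlinarith [hsqN]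
  have hterm : ∀ i ∈ Finset.univ.erase j0,
      (g i - g' i) ^ 2 = (a - a') ^ 2 * x i ^ 2 / S := by
    intro i hi
    have hine : i ≠ j0 := Finset.ne_of_mem_erase hi
    simp only [hgdef, hg'def, if_neg hine]
    have e : a * x i / s - a' * x i / s = (a - a') * x i / s := by ring
    rw [e, div_pow, hs2, mul_pow]
  have hrest : ∑ i ∈ Finset.univ.erase j0, (g i - g' i) ^ 2 = (a - a') ^ 2 := by
    rw [Finset.sum_congr rfl hterm]
    have hSerase : ∑ i ∈ Finset.univ.erase j0, x i ^ 2 = S := by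
      rw [hSdef]
      congr 1
      ext i
      simp [Finset.mem_erase, Finset.mem_filter]
    calc ∑ i ∈ Finset.univ.erase j0, (a - a') ^ 2 * x i ^ 2 / S
        = (a - a') ^ 2 * (∑ i ∈ Finset.univ.erase j0, x i ^ 2) / S := by
          rw [Finset.mul_sum, Finset.sum_div]
      _ = (a - a') ^ 2 * S / S := by rw [hSerase]
      _ = (a - a') ^ 2 := by field_simp
  have haa : (a - a') ^ 2 =
      (Real.sqrt (ρ - m ^ 2) - Real.sqrt (ρ - m' ^ 2)) ^ 2 * N := by
    have h1 : a = Real.sqrt N * Real.sqrt (ρ - m ^ 2) := by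
      rw [hadef, Real.sqrt_mul (by positivity)]
    have h2 : a' = Real.sqrt N * Real.sqrt (ρ - m' ^ 2) := by
      rw [ha'def, Real.sqrt_mul (by positivity)]
    rw [h1, h2]
    nlinarith [hsqN]
  rw [hsplit, h0, hrest, haa]
  field_simp

lemma fluctDist_le_sqrt {N : ℕ} {μ₁ μ₂ : Measure (Fin N → ℝ)}
    (γ : Measure ((Fin N → ℝ) × (Fin N → ℝ))) (hγ : IsProbabilityMeasure γ)
    (h1 : γ.map Prod.fst = μ₁) (h2 : γ.map Prod.snd = μ₂) (c : ℝ)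
    (hc : (∫ xy, (N : ℝ)⁻¹ * ∑ i, |xy.1 i - xy.2 i| ^ (2 : ℝ) ∂γ) = c) :
    fluctDist 2 N μ₁ μ₂ ≤ Real.sqrt c := by
  have hlb : ∀ d ∈ {c : ℝ | ∃ γ : Measure ((Fin N → ℝ) × (Fin N → ℝ)),
      IsProbabilityMeasure γ ∧ γ.map Prod.fst = μ₁ ∧ γ.map Prod.snd = μ₂ ∧
      c = ∫ xy, (N : ℝ)⁻¹ * ∑ i, |xy.1 i - xy.2 i| ^ (2 : ℝ) ∂γ}, (0 : ℝ) ≤ d := by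
    rintro d ⟨γ', -, -, -, rfl⟩
    refine integral_nonneg fun xy => ?_
    have h1 : (0:ℝ) ≤ ∑ i, |xy.1 i - xy.2 i| ^ (2 : ℝ) :=
      Finset.sum_nonneg fun i _ => Real.rpow_nonneg (abs_nonneg _) _
    positivity
  have hmem : c ∈ {c : ℝ | ∃ γ : Measure ((Fin N → ℝ) × (Fin N → ℝ)),
      IsProbabilityMeasure γ ∧ γ.map Prod.fst = μ₁ ∧ γ.map Prod.snd = μ₂ ∧
      c = ∫ xy, (N : ℝ)⁻¹ * ∑ i, |xy.1 i - xy.2 i| ^ (2 : ℝ) ∂γ} :=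
    ⟨γ, hγ, h1, h2, hc.symm⟩
  unfold fluctDist
  rw [Real.sqrt_eq_rpow]
  exact Real.rpow_le_rpow (le_csInf ⟨c, hmem⟩ hlb) (csInf_le ⟨0, hlb⟩ hmem) (by norm_num)

set_option maxHeartbeats 1000000 in
theorem stmt11 (N : ℕ) (hN : 0 < N) (hN2 : 2 ≤ N) (ρ : ℝ) (hρ : 0 < ρ)
    (m m' : ℝ) (hm : m ∈ Set.Ioo (-Real.sqrt ρ) (Real.sqrt ρ))
    (hm' : m' ∈ Set.Ioo (-Real.sqrt ρ) (Real.sqrt ρ))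
    (U : Matrix (Fin N) (Fin N) ℝ) (hU : GoodRotation hN U) :
    fluctDist 2 N (mcSpherical hN U m ρ) (mcSpherical hN U m' ρ) ≤
      (1 + 2 / Real.sqrt (1 - m ^ 2 / ρ)) * |m - m'| := by
  obtain ⟨hUo, -⟩ := hU
  have hsqρ : Real.sqrt ρ ^ 2 = ρ := Real.sq_sqrt hρ.le
  have hmlt : m ^ 2 < ρ := by
    obtain ⟨h1, h2⟩ := hm
    nlinarith
  have hm'lt : m' ^ 2 < ρ := by
    obtain ⟨h1, h2⟩ := hm'
    nlinarith
  set b : ℝ := Real.sqrt (ρ - m ^ 2) - Real.sqrt (ρ - m' ^ 2) with hbdef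
  set c₀ : ℝ := (m - m') ^ 2 + b ^ 2 with hc₀def
  have hc₀nn : 0 ≤ c₀ := by positivity
  -- the coupling
  have hprob : IsProbabilityMeasure (stdGaussian N) := by
    unfold _root_.stdGaussian; infer_instance
  set F : (Fin N → ℝ) → (Fin N → ℝ) × (Fin N → ℝ) :=
    fun x => (mcMap hN U m ρ x, mcMap hN U m' ρ x) with hFdef
  have hFm : Measurable F :=
    (mcMap_measurable hN U m ρ).prodMk (mcMap_measurable hN U m' ρ)
  set γ : Measure ((Fin N → ℝ) × (Fin N → ℝ)) := (stdGaussian N).map F with hγdef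
  have hγprob : IsProbabilityMeasure γ := Measure.isProbabilityMeasure_map hFm.aemeasurable
  have hfst : γ.map Prod.fst = mcSpherical hN U m ρ := by
    rw [hγdef, Measure.map_map measurable_fst hFm, mcSpherical_eq_map]
    rfl
  have hsnd : γ.map Prod.snd = mcSpherical hN U m' ρ := by
    rw [hγdef, Measure.map_map measurable_snd hFm, mcSpherical_eq_map]
    rfl
  -- the cost integrand is measurable
  have hGm : Measurable (fun xy : (Fin N → ℝ) × (Fin N → ℝ) =>
      (N : ℝ)⁻¹ * ∑ i, |xy.1 i - xy.2 i| ^ (2 : ℝ)) := by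
    refine measurable_const.mul ?_
    refine Finset.measurable_sum _ fun i _ => ?_
    exact (((measurable_pi_apply i).comp measurable_fst).sub
      ((measurable_pi_apply i).comp measurable_snd)).abs.pow_const _
  -- the cost equals c₀
  have hae : ∀ᵐ x ∂(stdGaussian N), x ⟨1, hN2⟩ ≠ 0 := by
    have h0 : (stdGaussian N) {x : Fin N → ℝ | x ⟨1, hN2⟩ = 0} = 0 := by
      have : {x : Fin N → ℝ | x ⟨1, hN2⟩ = 0} =
          Function.eval (⟨1, hN2⟩ : Fin N) ⁻¹' {0} := rfl
      rw [this]
      refine Measure.pi_eval_preimage_null _ ?_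
      exact (gaussianReal_absolutelyContinuous 0 one_ne_zero) (measure_singleton 0)
    rw [ae_iff]
    simpa only [ne_eq, not_not] using h0
  have hcost : (∫ xy, (N : ℝ)⁻¹ * ∑ i, |xy.1 i - xy.2 i| ^ (2 : ℝ) ∂γ) = c₀ := by
    rw [hγdef, integral_map hFm.aemeasurable hGm.aestronglyMeasurable]
    have : (fun x => (N : ℝ)⁻¹ * ∑ i, |(F x).1 i - (F x).2 i| ^ (2 : ℝ))
        =ᵐ[stdGaussian N] (fun _ => c₀) := by
      filter_upwards [hae] with x hx
      exact pointwise_cost hN hN2 hUo m m' ρ hmlt.le hm'lt.le x hx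
    rw [integral_congr_ae this, integral_const]
    simp
  have hstep1 : fluctDist 2 N (mcSpherical hN U m ρ) (mcSpherical hN U m' ρ)
      ≤ Real.sqrt c₀ :=
    fluctDist_le_sqrt γ hγprob hfst hsnd c₀ hcost
  refine hstep1.trans ?_
  -- arithmetic: √c₀ ≤ |m - m'| + |b| ≤ (1 + 2/√(1-m²/ρ)) |m - m'|
  have hstep2 : Real.sqrt c₀ ≤ |m - m'| + |b| := by
    have h1 : c₀ ≤ (|m - m'| + |b|) ^ 2 := by
      rw [hc₀def]
      nlinarith [abs_nonneg (m - m'), abs_nonneg b, sq_abs (m - m'), sq_abs b,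
        mul_nonneg (abs_nonneg (m - m')) (abs_nonneg b)]
    calc Real.sqrt c₀ ≤ Real.sqrt ((|m - m'| + |b|) ^ 2) := Real.sqrt_le_sqrt h1
      _ = |m - m'| + |b| := by
          rw [Real.sqrt_sq (by positivity)]
  refine hstep2.trans ?_
  -- bound |b|
  have hppos : 0 < ρ - m ^ 2 := by linarith
  have hqpos : 0 < ρ - m' ^ 2 := by linarith
  have hsp : 0 < Real.sqrt (ρ - m ^ 2) := Real.sqrt_pos.mpr hppos
  have hsq : 0 < Real.sqrt (ρ - m' ^ 2) := Real.sqrt_pos.mpr hqpos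
  have hsp2 : Real.sqrt (ρ - m ^ 2) ^ 2 = ρ - m ^ 2 := Real.sq_sqrt hppos.le
  have hsq2 : Real.sqrt (ρ - m' ^ 2) ^ 2 = ρ - m' ^ 2 := Real.sq_sqrt hqpos.le
  have hbmul : b * (Real.sqrt (ρ - m ^ 2) + Real.sqrt (ρ - m' ^ 2))
      = m' ^ 2 - m ^ 2 := by
    rw [hbdef]
    nlinarith [hsp2, hsq2]
  have habsb : |b| * (Real.sqrt (ρ - m ^ 2) + Real.sqrt (ρ - m' ^ 2))
      = |m' ^ 2 - m ^ 2| := by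
    rw [← hbmul, abs_mul,
      abs_of_nonneg (by positivity : (0:ℝ) ≤ Real.sqrt (ρ - m ^ 2) + Real.sqrt (ρ - m' ^ 2))]
  have hmabs : |m| ≤ Real.sqrt ρ := by
    rw [abs_le]; exact ⟨hm.1.le, hm.2.le⟩
  have hm'abs : |m'| ≤ Real.sqrt ρ := by
    rw [abs_le]; exact ⟨hm'.1.le, hm'.2.le⟩
  have hsqrtρ : 0 < Real.sqrt ρ := Real.sqrt_pos.mpr hρ
  have hbbound : |b| ≤ 2 * Real.sqrt ρ / Real.sqrt (ρ - m ^ 2) * |m - m'| := by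
    have h1 : |b| * Real.sqrt (ρ - m ^ 2) ≤ |m' ^ 2 - m ^ 2| := by
      rw [← habsb]
      exact mul_le_mul_of_nonneg_left (le_add_of_nonneg_right hsq.le) (abs_nonneg b)
    have h2 : |m' ^ 2 - m ^ 2| ≤ 2 * Real.sqrt ρ * |m - m'| := by
      have e : m' ^ 2 - m ^ 2 = (m' - m) * (m' + m) := by ring
      rw [e, abs_mul]
      have h3 : |m' + m| ≤ 2 * Real.sqrt ρ := by
        calc |m' + m| ≤ |m'| + |m| := abs_add_le _ _
          _ ≤ 2 * Real.sqrt ρ := by linarith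
      have h4 : |m' - m| = |m - m'| := abs_sub_comm _ _
      rw [h4]
      calc |m - m'| * |m' + m| ≤ |m - m'| * (2 * Real.sqrt ρ) :=
            mul_le_mul_of_nonneg_left h3 (abs_nonneg _)
        _ = 2 * Real.sqrt ρ * |m - m'| := by ring
    rw [div_mul_eq_mul_div, le_div_iff₀ hsp]
    linarith
  have hrw : 2 / Real.sqrt (1 - m ^ 2 / ρ) = 2 * Real.sqrt ρ / Real.sqrt (ρ - m ^ 2) := by
    have e : 1 - m ^ 2 / ρ = (ρ - m ^ 2) / ρ := by field_simp
    rw [e, Real.sqrt_div hppos.le]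
    field_simp
  rw [add_mul, one_mul, hrw]
  linarith
end
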